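/- arXiv:1507.02192 — 8 statements merged into one kernel-verified Lean document; each statement's English description precedes it below -/
import Mathlib

section
/- Let (R, φ) be a Picard–Vessiot extension for the system φY = AY over (k, φ), and assume that R contains no element x with x² + 1 = 0. Then (R[i], φ) is a Picard–Vessiot extension for the system φY = AY over (k[i], φ). -/
universe u v w x

open scoped TensorProduct

section DifferenceAlgebra

variable {R : Type*} [CommRing R]

/-- A difference ideal of `(R, φ)`: an ideal stable under `φ`. -/
def IsDiffIdeal (φ : R ≃+* R) (I : Ideal R) : Prop :=
  ∀ y ∈ I, φ y ∈ I

/-- A simple difference ring: the only difference ideals are `(0)` and `R`. -/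
def IsSimpleDiffRing (φ : R ≃+* R) : Prop :=
  ∀ I : Ideal R, IsDiffIdeal φ I → I = ⊥ ∨ I = ⊤

/-- A real (commutative) ring: `0` is not a sum of squares of nonzero elements. -/
def IsRealRing (A : Type*) [CommRing A] : Prop :=
  ∀ (m : ℕ) (f : Fin m → A), (∀ i, f i ≠ 0) → ∑ i, f i ^ 2 = 0 → m = 0

/-- A real closed field: a real field with no proper real algebraic extension. -/
def IsRealClosedField (C : Type u) [Field C] : Prop :=
  IsRealRing C ∧ ∀ (L : Type u) [Field L] [Algebra C L],
    Algebra.IsAlgebraic C L → IsRealRing L → Function.Surjective (algebraMap C L)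

/-- The field of constants of a difference field `(k, φ)`. -/
def fixedSubfield {k : Type*} [Field k] (φ : k ≃+* k) : Subfield k where
  carrier := {y | φ y = y}
  mul_mem' := fun {a b} ha hb => by
    simp only [Set.mem_setOf_eq, map_mul] at *
    rw [ha, hb]
  one_mem' := map_one φ
  add_mem' := fun {a b} ha hb => by
    simp only [Set.mem_setOf_eq, map_add] at *
    rw [ha, hb]
  zero_mem' := map_zero φ
  neg_mem' := fun {a} ha => by
    simp only [Set.mem_setOf_eq, map_neg] at *
    rw [ha]
  inv_mem' := fun a ha => by
    simp only [Set.mem_setOf_eq, map_inv₀] at *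
    rw [ha]

/-- `(S, φS)` is a difference ring extension of `(k, φk)`. -/
def DiffCompat {k : Type*} [CommRing k] (S : Type*) [CommRing S] [Algebra k S]
    (φk : k ≃+* k) (φS : S ≃+* S) : Prop :=
  ∀ y : k, φS (algebraMap k S y) = algebraMap k S (φk y)

/-- `U` is a fundamental matrix of solutions of `φ Y = A Y` in `S`. -/
def IsFundamentalMatrix {k : Type*} [CommRing k] {S : Type*} [CommRing S] [Algebra k S]
    (φS : S ≃+* S) {n : ℕ} (A : Matrix (Fin n) (Fin n) k)
    (U : Matrix (Fin n) (Fin n) S) : Prop :=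
  IsUnit U.det ∧ U.map ⇑φS = A.map (algebraMap k S) * U

/-- `S` is generated, as a `k`-algebra, by the entries of `U` and `det(U)⁻¹`. -/
def GeneratedByFund (k : Type*) [CommSemiring k] {S : Type*} [CommRing S] [Algebra k S]
    {n : ℕ} (U : Matrix (Fin n) (Fin n) S) : Prop :=
  Algebra.adjoin k ((Set.range fun p : Fin n × Fin n => U p.1 p.2) ∪ {Ring.inverse U.det}) = ⊤

/-- A Picard–Vessiot extension for `φ Y = A Y` over `(k, φk)`. -/
def IsPicardVessiot (k : Type*) [Field k] (S : Type*) [CommRing S] [Algebra k S]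
    (φk : k ≃+* k) (φS : S ≃+* S) {n : ℕ} (A : Matrix (Fin n) (Fin n) k) : Prop :=
  Nontrivial S ∧ DiffCompat S φk φS ∧
    (∃ U : Matrix (Fin n) (Fin n) S, IsFundamentalMatrix φS A U ∧ GeneratedByFund k U) ∧
    IsSimpleDiffRing φS

/-- `Ri = R[i]`: the ring obtained from `R` by adjoining a square root `j` of `-1`,
free as an `R`-module with basis `1, j`. -/
def IsAdjoinI (R : Type*) [CommRing R] (Ri : Type*) [CommRing Ri] [Algebra R Ri]
    (j : Ri) : Prop :=
  j ^ 2 = -1 ∧ ∀ y : Ri, ∃! p : R × R, y = algebraMap R Ri p.1 + algebraMap R Ri p.2 * j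

end DifferenceAlgebra

/-- If `(R, φ)` is a Picard–Vessiot extension for `φ Y = A Y` over `(k, φ)` containing no
element `x` with `x² + 1 = 0`, then `(R[i], φ)` is a Picard–Vessiot extension for
`φ Y = A Y` over `(k[i], φ)`. -/
theorem statement0
    {k : Type u} [Field k] [CharZero k] (φk : k ≃+* k)
    (hk_real : IsRealRing k)
    (hC_rc : IsRealClosedField (↥(fixedSubfield φk)))
    {n : ℕ} (A : Matrix (Fin n) (Fin n) k) (hA : IsUnit A.det)
    (R : Type v) [CommRing R] [Algebra k R] (φR : R ≃+* R)
    (hPV : IsPicardVessiot k R φk φR A)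
    (hnoi : ∀ y : R, y ^ 2 + 1 ≠ 0)
    (Ri : Type w) [CommRing Ri] [Algebra R Ri] [Algebra k Ri] [IsScalarTower k R Ri]
    (j : Ri) (hRi : IsAdjoinI R Ri j)
    (φi : Ri ≃+* Ri) (hcompat : DiffCompat Ri φR φi) (hφj : φi j = j) :
    (∀ y : Ri, y ∈ Algebra.adjoin k ({j} : Set Ri) ↔ φi y ∈ Algebra.adjoin k ({j} : Set Ri)) ∧
    IsSimpleDiffRing φi ∧
    ∃ U : Matrix (Fin n) (Fin n) Ri, IsFundamentalMatrix φi A U ∧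
      GeneratedByFund (↥(Algebra.adjoin k ({j} : Set Ri))) U := by
  obtain ⟨hj2, hrep⟩ := hRi
  obtain ⟨hne, hDC, ⟨U, ⟨hUdet, hUeq⟩, hUgen⟩, hsimple⟩ := hPV
  have hki : ∀ c : k, φi (algebraMap k Ri c) = algebraMap k Ri (φk c) := by
    intro c
    rw [IsScalarTower.algebraMap_apply k R Ri, IsScalarTower.algebraMap_apply k R Ri,
      hcompat, hDC]
  -- Part 1
  have hfwd : ∀ (ψ : Ri ≃+* Ri), (∀ c : k, ∃ c' : k, ψ (algebraMap k Ri c) = algebraMap k Ri c')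
      → ψ j = j → ∀ y ∈ Algebra.adjoin k ({j} : Set Ri),
        ψ y ∈ Algebra.adjoin k ({j} : Set Ri) := by
    intro ψ hψk hψj y hy
    induction hy using Algebra.adjoin_induction with
    | mem x hx =>
      rw [Set.mem_singleton_iff] at hx
      subst hx
      rw [hψj]
      exact Algebra.subset_adjoin rfl
    | algebraMap c =>
      obtain ⟨c', hc'⟩ := hψk c
      rw [hc']
      exact Subalgebra.algebraMap_mem _ _
    | add x y hx hy ihx ihy => rw [map_add]; exact add_mem ihx ihy
    | mul x y hx hy ihx ihy => rw [map_mul]; exact mul_mem ihx ihy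
  have part1 : ∀ y : Ri, y ∈ Algebra.adjoin k ({j} : Set Ri) ↔
      φi y ∈ Algebra.adjoin k ({j} : Set Ri) := by
    intro y
    constructor
    · exact hfwd φi (fun c => ⟨φk c, hki c⟩) hφj y
    · intro hy
      have hsymj : φi.symm j = j := by
        conv_lhs => rw [← hφj]
        exact φi.symm_apply_apply j
      have := hfwd φi.symm (fun c => ⟨φk.symm c, by
        apply φi.injective
        rw [φi.apply_symm_apply, hki, RingEquiv.apply_symm_apply]⟩)
        hsymj (φi y) hy
      rwa [φi.symm_apply_apply] at this
  refine ⟨part1, ?_, ?_⟩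
  -- Part 2 : simplicity
  · intro I hI
    by_cases hIbot : I = ⊥
    · exact Or.inl hIbot
    right
    -- the ideal J of "first coordinates"
    set J : Ideal R :=
      { carrier := {a | ∃ b : R, algebraMap R Ri a + algebraMap R Ri b * j ∈ I}
        zero_mem' := ⟨0, by simpa using I.zero_mem⟩
        add_mem' := by
          rintro a1 a2 ⟨b1, h1⟩ ⟨b2, h2⟩
          exact ⟨b1 + b2, by
            have := I.add_mem h1 h2
            rw [map_add, map_add]
            convert this using 1
            ring⟩
        smul_mem' := by
          rintro r a ⟨b, hb⟩
          refine ⟨r * b, ?_⟩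
          have := I.mul_mem_left (algebraMap R Ri r) hb
          rw [smul_eq_mul, map_mul, map_mul]
          convert this using 1
          ring } with hJ
    have hJdiff : IsDiffIdeal φR J := by
      rintro a ⟨b, hb⟩
      refine ⟨φR b, ?_⟩
      have := hI _ hb
      rwa [map_add, map_mul, hcompat, hcompat, hφj] at this
    have hJtop : J = ⊤ := by
      rcases hsimple J hJdiff with hbot | htop
      · exfalso
        apply hIbot
        rw [Submodule.eq_bot_iff] at hbot ⊢
        intro x hx
        obtain ⟨⟨a, b⟩, hab, -⟩ := hrep x
        have ha : a ∈ J := ⟨b, hab ▸ hx⟩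
        have hxj : x * j ∈ I := I.mul_mem_right j hx
        have hb : -b ∈ J := by
          refine ⟨a, ?_⟩
          have : x * j = algebraMap R Ri (-b) + algebraMap R Ri a * j := by
            rw [hab]
            ring_nf
            rw [hj2, map_neg]
            ring
          rwa [← this]
        have ha0 : a = 0 := hbot a ha
        have hb0 : b = 0 := by have := hbot _ hb; simpa using this
        rw [hab, ha0, hb0]
        simp
      · exact htop
    have h1J : (1 : R) ∈ J := hJtop ▸ Submodule.mem_top
    obtain ⟨b, hb⟩ := h1J
    -- the contracted ideal K
    set K : Ideal R := Ideal.comap (algebraMap R Ri) I with hK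
    have hKdiff : IsDiffIdeal φR K := by
      intro a ha
      have := hI _ ha
      rwa [Ideal.mem_comap, ← hcompat] at *
    rcases hsimple K hKdiff with hKbot | hKtop
    · exfalso
      -- derive b^2 + 1 = 0 in R
      have hjj : j * j = -1 := by rw [← sq]; exact hj2
      have h2 : j - algebraMap R Ri b ∈ I := by
        have := I.mul_mem_right j hb
        have e : (algebraMap R Ri 1 + algebraMap R Ri b * j) * j
            = j - algebraMap R Ri b := by
          rw [map_one, add_mul, one_mul, mul_assoc, hjj]
          ring
        rwa [e] at this
      have h3 : algebraMap R Ri b * j - algebraMap R Ri (b * b) ∈ I := by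
        have := I.mul_mem_left (algebraMap R Ri b) h2
        rwa [mul_sub, ← map_mul] at this
      have h4 : algebraMap R Ri (1 + b * b) ∈ I := by
        have := I.sub_mem hb h3
        have e : algebraMap R Ri 1 + algebraMap R Ri b * j -
            (algebraMap R Ri b * j - algebraMap R Ri (b * b))
            = algebraMap R Ri (1 + b * b) := by
          rw [map_add]
          ring
        rwa [e] at this
      have : (1 + b * b) ∈ K := h4
      rw [hKbot, Ideal.mem_bot] at this
      exact hnoi b (by rw [sq]; linear_combination this)
    · have : (1 : R) ∈ K := hKtop ▸ Submodule.mem_top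
      rw [Ideal.mem_comap, map_one] at this
      exact (Ideal.eq_top_iff_one I).2 this
  -- Part 3 : fundamental matrix
  · set f := algebraMap R Ri with hf
    refine ⟨U.map f, ⟨?_, ?_⟩, ?_⟩
    · show IsUnit (f.mapMatrix U).det
      rw [← RingHom.map_det]
      exact hUdet.map f
    · have e1 : (U.map f).map ⇑φi = (U.map ⇑φR).map f := by
        ext p q
        simp only [Matrix.map_apply]
        exact (hcompat _)
      have e2 : (⇑f ∘ ⇑(algebraMap k R) : k → Ri) = ⇑(algebraMap k Ri) :=
        funext fun x => (IsScalarTower.algebraMap_apply k R Ri x).symm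
      rw [e1, hUeq, Matrix.map_mul, Matrix.map_map, e2]
    · -- generation over k[j]
      set k' := Algebra.adjoin k ({j} : Set Ri) with hk'
      have hjk' : j ∈ k' := Algebra.subset_adjoin rfl
      rw [GeneratedByFund, eq_top_iff]
      rintro y -
      set S' : Set Ri := (Set.range fun p : Fin n × Fin n => (U.map f) p.1 p.2)
        ∪ {Ring.inverse (U.map f).det} with hS'
      -- the inverse determinant maps correctly
      have hinv : f (Ring.inverse U.det) = Ring.inverse (U.map f).det := by
        obtain ⟨u, hu⟩ := hUdet
        rw [← hu, Ring.inverse_unit]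
        have : (U.map f).det = (Units.map (f : R →* Ri) u : Ri) := by
          rw [Units.coe_map]
          show (f.mapMatrix U).det = f ↑u
          rw [← RingHom.map_det, hu]
        rw [this, Ring.inverse_unit]
        rfl
      -- every image of R lands in adjoin k' S'
      have hR : ∀ r : R, f r ∈ Algebra.adjoin (↥k') S' := by
        intro r
        have hr : r ∈ Algebra.adjoin k
            ((Set.range fun p : Fin n × Fin n => U p.1 p.2) ∪ {Ring.inverse U.det}) := by
          rw [hUgen]; trivial
        induction hr using Algebra.adjoin_induction with
        | mem x hx =>
          rcases hx with ⟨p, rfl⟩ | hx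
          · exact Algebra.subset_adjoin (Or.inl ⟨p, rfl⟩)
          · rw [Set.mem_singleton_iff] at hx
            subst hx
            rw [hinv]
            exact Algebra.subset_adjoin (Or.inr rfl)
        | algebraMap c =>
          rw [← IsScalarTower.algebraMap_apply k R Ri,
            IsScalarTower.algebraMap_apply k (↥k') Ri]
          exact Subalgebra.algebraMap_mem _ _
        | add x y hx hy ihx ihy => rw [map_add]; exact add_mem ihx ihy
        | mul x y hx hy ihx ihy => rw [map_mul]; exact mul_mem ihx ihy
      obtain ⟨⟨a, b⟩, hab, -⟩ := hrep y
      rw [hab]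
      have hjmem : j ∈ Algebra.adjoin (↥k') S' :=
        Subalgebra.algebraMap_mem (Algebra.adjoin (↥k') S') ⟨j, hjk'⟩
      exact add_mem (hR a) (mul_mem (hR b) hjmem)
end

section
/- Let (R, φ) be a Picard–Vessiot extension for the system φY = AY over (k, φ). Then there exist an idempotent e ∈ R and a positive integer t such that φ^t(e) = e, R is the internal direct sum R = ⊕_{j=0}^{t−1} φ^j(e)R, and for every 0 ≤ j ≤ t−1 the ring φ^j(e)R is an integral domain. -/
universe u v w x

open scoped TensorProduct

open Fin.NatCast

section KeyLemma

variable {R : Type*} [CommRing R]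

private lemma comap_symm_comap (φ : R ≃+* R) (q : Ideal R) :
    Ideal.comap φ (Ideal.comap φ.symm q) = q := by
  ext x
  simp [Ideal.mem_comap]

private lemma minPrime_comap_symm (φ : R ≃+* R) {p : Ideal R}
    (hp : p ∈ minimalPrimes R) :
    Ideal.comap φ.symm p ∈ minimalPrimes R := by
  obtain ⟨⟨hp1, -⟩, hpmin⟩ := hp
  haveI := hp1
  refine ⟨⟨Ideal.comap_isPrime _ _, bot_le⟩, ?_⟩
  rintro q ⟨hq, -⟩ hle
  haveI := hq
  have h2 : Ideal.comap φ q ≤ p := by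
    rw [← comap_symm_comap φ p]
    exact Ideal.comap_mono hle
  have h3 := hpmin ⟨Ideal.comap_isPrime _ _, bot_le⟩ h2
  intro x hx
  have h4 : φ.symm x ∈ p := Ideal.mem_comap.mp hx
  have h5 := h3 h4
  have h6 : φ (φ.symm x) ∈ q := Ideal.mem_comap.mp h5
  rwa [RingEquiv.apply_symm_apply] at h6

private theorem key_decomp {R : Type*} [CommRing R] [Nontrivial R] [IsNoetherianRing R]
    (φ : R ≃+* R) (hsimple : IsSimpleDiffRing φ) :
    ∃ (e : R) (t : ℕ), 0 < t ∧ IsIdempotentElem e ∧ (⇑φ)^[t] e = e ∧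
      (∀ y : R, ∃! c : Fin t → R,
        (∀ i : Fin t, c i ∈ Ideal.span {(⇑φ)^[(i : ℕ)] e}) ∧ y = ∑ i, c i) ∧
      (∀ i : Fin t, (⇑φ)^[(i : ℕ)] e ≠ 0 ∧
        ∀ a b : R, a ∈ Ideal.span {(⇑φ)^[(i : ℕ)] e} → b ∈ Ideal.span {(⇑φ)^[(i : ℕ)] e} →
          a * b = 0 → a = 0 ∨ b = 0) := by
  classical
  -- R is reduced
  have hred : nilradical R = ⊥ := by
    have hdiff : IsDiffIdeal φ (nilradical R) := by
      intro y hy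
      obtain ⟨m, hm⟩ := mem_nilradical.mp hy
      exact mem_nilradical.mpr ⟨m, by rw [← map_pow, hm, map_zero]⟩
    rcases hsimple (nilradical R) hdiff with h | h
    · exact h
    · exfalso
      have h1 : (1 : R) ∈ nilradical R := h ▸ Submodule.mem_top
      obtain ⟨m, hm⟩ := mem_nilradical.mp h1
      rw [one_pow] at hm
      exact one_ne_zero hm
  -- a minimal prime
  obtain ⟨M, hM⟩ := Ideal.exists_maximal R
  haveI := hM.isPrime
  obtain ⟨p₀, hp₀', -⟩ := Ideal.exists_minimalPrimes_le (I := (⊥ : Ideal R)) (J := M) bot_le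
  have hp₀ : p₀ ∈ minimalPrimes R := hp₀'
  -- the shift on ideals
  set σ : Ideal R → Ideal R := fun q => Ideal.comap φ.symm q with hσ
  have hmemσ : ∀ (q : Ideal R) (x : R), φ x ∈ σ q ↔ x ∈ q := by
    intro q x
    simp [hσ, Ideal.mem_comap]
  have hσinj : Function.Injective σ := by
    intro q q' h
    have h2 := congrArg (Ideal.comap φ) h
    simpa only [hσ, comap_symm_comap] using h2
  have hσmin : ∀ q ∈ minimalPrimes R, σ q ∈ minimalPrimes R :=
    fun q hq => minPrime_comap_symm φ hq
  set P : ℕ → Ideal R := fun m => σ^[m] p₀ with hP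
  have hPmin : ∀ m, P m ∈ minimalPrimes R := by
    intro m
    induction m with
    | zero => exact hp₀
    | succ m ih =>
      simp only [hP] at ih ⊢
      rw [Function.iterate_succ_apply']
      exact hσmin _ ih
  have hcancel : ∀ i d : ℕ, P i = P (i + d) → σ^[d] p₀ = p₀ := by
    intro i d h
    simp only [hP] at h
    apply hσinj.iterate i
    rw [← Function.iterate_add_apply σ i d p₀]
    exact h.symm
  -- the period
  have hper : ∃ d, 0 < d ∧ σ^[d] p₀ = p₀ := by
    have hfin := minimalPrimes.finite_of_isNoetherianRing R
    obtain ⟨i, -, j, -, hij, hPij⟩ :=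
      Set.infinite_univ.exists_ne_map_eq_of_mapsTo (f := P)
        (fun m _ => hPmin m) hfin
    rcases Ne.lt_or_gt hij with hlt | hlt
    · exact ⟨j - i, by omega, hcancel i (j - i) (by rw [Nat.add_sub_cancel' hlt.le]; exact hPij)⟩
    · exact ⟨i - j, by omega, hcancel j (i - j) (by rw [Nat.add_sub_cancel' hlt.le]; exact hPij.symm)⟩
  set t := Nat.find hper with hT
  have htpos : 0 < t := (Nat.find_spec hper).1
  have htfix : σ^[t] p₀ = p₀ := (Nat.find_spec hper).2
  have htmin : ∀ d, 0 < d → d < t → σ^[d] p₀ ≠ p₀ := by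
    intro d hd hdt h
    exact Nat.find_min hper hdt ⟨hd, h⟩
  haveI : NeZero t := ⟨htpos.ne'⟩
  -- periodicity of P
  have hPt : ∀ m, P (m + t) = P m := by
    intro m
    simp only [hP]
    rw [Function.iterate_add_apply, htfix]
  have hPmod : ∀ m, P (m % t) = P m := by
    intro m
    conv_rhs => rw [← Nat.mod_add_div m t]
    generalize m / t = c
    induction c with
    | zero => simp
    | succ c ih => rw [Nat.mul_succ, ← Nat.add_assoc, hPt, ih]
  set Pf : Fin t → Ideal R := fun i => P i.val with hPf
  have hPcast : ∀ m : ℕ, Pf ((m : ℕ) : Fin t) = P m := by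
    intro m
    simp only [hPf, Fin.val_natCast]
    exact hPmod m
  have hPfprime : ∀ i, (Pf i).IsPrime := fun i => (hPmin i.val).1.1
  have hPfmin : ∀ i, Pf i ∈ minimalPrimes R := fun i => hPmin i.val
  have hPfsucc : ∀ i : Fin t, Pf (i + 1) = σ (Pf i) := by
    intro i
    have h1 : (i + 1 : Fin t) = (((i : ℕ) + 1 : ℕ) : Fin t) := by
      rw [Nat.cast_add_one, Fin.cast_val_eq_self]
    rw [h1, hPcast]
    simp only [hPf, hP]
    rw [Function.iterate_succ_apply']
  have hφmem : ∀ (i : Fin t) (x : R), φ x ∈ Pf (i + 1) ↔ x ∈ Pf i := by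
    intro i x
    rw [hPfsucc]
    exact hmemσ _ x
  have hPfinj : Function.Injective Pf := by
    have haux : ∀ i j : Fin t, (i : ℕ) < (j : ℕ) → Pf i = Pf j → False := by
      intro i j hlt hij
      have h1 : P (i : ℕ) = P ((i : ℕ) + ((j : ℕ) - (i : ℕ))) := by
        rw [Nat.add_sub_cancel' hlt.le]
        exact hij
      exact htmin ((j : ℕ) - (i : ℕ)) (by omega) (by omega) (hcancel _ _ h1)
    intro i j hij
    by_contra hne
    have hne' : (i : ℕ) ≠ (j : ℕ) := fun h => hne (Fin.ext h)
    rcases Ne.lt_or_gt hne' with h | h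
    · exact haux i j h hij
    · exact haux j i h hij.symm
  -- membership in finite infima
  have hmemInf : ∀ (s : Finset (Fin t)) (x : R), x ∈ s.inf Pf ↔ ∀ j ∈ s, x ∈ Pf j := by
    intro s x
    induction s using Finset.induction with
    | empty => simp
    | insert _ _ h ih =>
      rw [Finset.inf_insert]
      simp [Submodule.mem_inf, ih]
  -- the intersection of all the minimal primes in the orbit is zero
  have hJall : Finset.univ.inf Pf = ⊥ := by
    have hdiff : IsDiffIdeal φ (Finset.univ.inf Pf) := by
      intro y hy
      rw [hmemInf] at hy ⊢
      intro j _
      have h2 := (hφmem (j - 1) y).mpr (hy (j - 1) (Finset.mem_univ _))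
      rwa [sub_add_cancel] at h2
    rcases hsimple _ hdiff with h | h
    · exact h
    · exfalso
      have h2 : Finset.univ.inf Pf ≤ Pf ⟨0, htpos⟩ := Finset.inf_le (Finset.mem_univ _)
      rw [h] at h2
      exact (hPfprime ⟨0, htpos⟩).ne_top (top_le_iff.mp h2)
  -- the complementary ideals
  set Idl : Fin t → Ideal R := fun i => (Finset.univ.erase i).inf Pf with hIdl
  have hImem : ∀ i x, x ∈ Idl i ↔ ∀ j, j ≠ i → x ∈ Pf j := by
    intro i x
    simp only [hIdl]
    rw [hmemInf]
    constructor
    · intro h j hj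
      exact h j (Finset.mem_erase.mpr ⟨hj, Finset.mem_univ _⟩)
    · intro h j hj
      exact h j (Finset.mem_erase.mp hj).1
  have hIle : ∀ i j, j ≠ i → Idl i ≤ Pf j := by
    intro i j h
    exact Finset.inf_le (Finset.mem_erase.mpr ⟨h, Finset.mem_univ _⟩)
  have hIinf : ∀ i j, i ≠ j → Idl i ⊓ Idl j = ⊥ := by
    intro i j hij
    refine le_antisymm ?_ bot_le
    rw [← hJall]
    refine Finset.le_inf fun l _ => ?_
    rcases ne_or_eq l i with h | h
    · exact inf_le_left.trans (hIle i l h)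
    · refine inf_le_right.trans (hIle j l ?_)
      rw [h]
      exact hij
  have hφI : ∀ i x, x ∈ Idl i → φ x ∈ Idl (i + 1) := by
    intro i x hx
    rw [hImem] at hx ⊢
    intro j hj
    have h1 : j - 1 ≠ i := by
      intro h
      apply hj
      rw [← h, sub_add_cancel]
    have h2 := (hφmem (j - 1) x).mpr (hx _ h1)
    rwa [sub_add_cancel] at h2
  have hInebot : ∀ i, Idl i ≠ ⊥ := by
    intro i h
    have h2 : (Finset.univ.erase i).inf Pf ≤ Pf i := by
      have : Idl i ≤ Pf i := h ▸ bot_le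
      simpa only [hIdl] using this
    obtain ⟨j, hj, hle⟩ := (Ideal.IsPrime.inf_le' (hPfprime i)).mp h2
    have hji : j ≠ i := (Finset.mem_erase.mp hj).1
    have h3 := (hPfmin i).2 ⟨hPfprime j, bot_le⟩ hle
    exact hji (hPfinj (le_antisymm hle h3))
  -- the sum of the complementary ideals is everything
  have hsup : (⨆ i, Idl i) = ⊤ := by
    have hdiff : IsDiffIdeal φ (⨆ i, Idl i) := by
      intro y hy
      obtain ⟨f, hf, rfl⟩ := (Submodule.mem_iSup_iff_exists_finsupp Idl y).mp hy
      rw [Finsupp.sum, map_sum]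
      exact Submodule.sum_mem _ fun i _ =>
        Submodule.mem_iSup_of_mem (i + 1) (hφI i _ (hf i))
    rcases hsimple _ hdiff with h | h
    · exact absurd (le_bot_iff.mp (h ▸ le_iSup Idl ⟨0, htpos⟩)) (hInebot ⟨0, htpos⟩)
    · exact h
  -- decompose 1
  obtain ⟨f, hf, hf1⟩ := (Submodule.mem_iSup_iff_exists_finsupp Idl 1).mp
    (hsup ▸ Submodule.mem_top)
  set a : Fin t → R := fun i => f i with ha
  have hsum1 : ∑ i, a i = 1 := by
    rw [← hf1]
    exact (Finsupp.sum_fintype f (fun _ xi => xi) (fun _ => rfl)).symm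
  have haI : ∀ i, a i ∈ Idl i := hf
  have horth : ∀ i j, i ≠ j → a i * a j = 0 := by
    intro i j hij
    have h1 : a i * a j ∈ Idl i ⊓ Idl j :=
      ⟨Ideal.mul_mem_right _ _ (haI i), Ideal.mul_mem_left _ _ (haI j)⟩
    rw [hIinf i j hij] at h1
    exact (Submodule.mem_bot R).mp h1
  have hxa : ∀ i x, x ∈ Idl i → x * a i = x := by
    intro i x hx
    have h1 : x * ∑ j, a j = x := by rw [hsum1, mul_one]
    rw [Finset.mul_sum, Finset.sum_eq_single i
      (fun j _ hj => by
        have h2 : x * a j ∈ Idl i ⊓ Idl j :=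
          ⟨Ideal.mul_mem_right _ _ hx, Ideal.mul_mem_left _ _ (haI j)⟩
        rw [hIinf i j (Ne.symm hj)] at h2
        exact (Submodule.mem_bot R).mp h2)
      (fun h => absurd (Finset.mem_univ i) h)] at h1
    exact h1
  have hidem : ∀ i, a i * a i = a i := fun i => hxa i (a i) (haI i)
  have huniqI : ∀ b c : Fin t → R, (∀ i, b i ∈ Idl i) → (∀ i, c i ∈ Idl i) →
      ∑ i, b i = ∑ i, c i → b = c := by
    intro b c hb hc hbc
    funext i
    have h1 : (b i - c i) * a i = b i - c i :=
      hxa i _ (Submodule.sub_mem _ (hb i) (hc i))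
    have h2 : (∑ j, (b j - c j)) = 0 := by
      rw [Finset.sum_sub_distrib, hbc, sub_self]
    have h3 : (∑ j, (b j - c j)) * a i = (b i - c i) * a i := by
      rw [Finset.sum_mul]
      refine Finset.sum_eq_single i
        (fun j _ hj => ?_) (fun h => absurd (Finset.mem_univ i) h)
      have h4 : (b j - c j) * a i ∈ Idl j ⊓ Idl i :=
        ⟨Ideal.mul_mem_right _ _ (Submodule.sub_mem _ (hb j) (hc j)),
          Ideal.mul_mem_left _ _ (haI i)⟩
      rw [hIinf j i hj] at h4
      exact (Submodule.mem_bot R).mp h4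
    have h5 : b i - c i = 0 := by
      rw [← h1, ← h3, h2, zero_mul]
    exact sub_eq_zero.mp h5
  have hφa : ∀ i, φ (a i) = a (i + 1) := by
    have hbI : ∀ j : Fin t, φ (a (j - 1)) ∈ Idl j := by
      intro j
      have h1 := hφI (j - 1) _ (haI (j - 1))
      rwa [sub_add_cancel] at h1
    have hbsum : ∑ j, φ (a (j - 1)) = ∑ j, a j := by
      rw [← map_sum]
      have h1 : ∑ j, a (j - 1) = ∑ j, a j :=
        Fintype.sum_equiv (Equiv.subRight (1 : Fin t)) _ _ (fun j => rfl)
      rw [h1, hsum1, map_one]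
    have h2 := huniqI _ _ hbI haI hbsum
    intro i
    have h3 := congrFun h2 (i + 1)
    simpa [add_sub_cancel_right] using h3
  set e := a 0 with he
  have hiter : ∀ m : ℕ, (⇑φ)^[m] e = a ((m : ℕ) : Fin t) := by
    intro m
    induction m with
    | zero => simp [he]
    | succ m ih =>
      rw [Function.iterate_succ_apply', ih, hφa, ← Nat.cast_add_one]
  have hfix : (⇑φ)^[t] e = e := by
    rw [hiter, Fin.natCast_self]
  have hival : ∀ i : Fin t, (⇑φ)^[(i : ℕ)] e = a i := by
    intro i
    rw [hiter, Fin.cast_val_eq_self]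
  have hane : ∀ i, a i ≠ 0 := by
    intro i h0
    apply hInebot i
    refine le_antisymm ?_ bot_le
    intro x hx
    have h1 := hxa i x hx
    rw [h0, mul_zero] at h1
    rw [← h1]
    exact Submodule.zero_mem ⊥
  refine ⟨e, t, htpos, hidem 0, hfix, ?_, ?_⟩
  · -- direct sum decomposition
    intro y
    refine ⟨fun i => y * a i, ⟨fun i => ?_, ?_⟩, ?_⟩
    · rw [hival]
      exact Ideal.mem_span_singleton.mpr ⟨y, mul_comm y (a i)⟩
    · rw [← Finset.mul_sum, hsum1, mul_one]
    · rintro c ⟨hc1, hc2⟩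
      funext i
      have hspan : ∀ j, ∃ r, c j = r * a j := by
        intro j
        obtain ⟨r, hr⟩ := Ideal.mem_span_singleton.mp ((hival j) ▸ hc1 j)
        exact ⟨r, by rw [hr, mul_comm]⟩
      obtain ⟨r, hr⟩ := hspan i
      have hci : c i * a i = c i := by
        rw [hr, mul_assoc, hidem i]
      have h1 : y * a i = c i := by
        rw [hc2, Finset.sum_mul, Finset.sum_eq_single i
          (fun j _ hj => by
            obtain ⟨r', hr'⟩ := hspan j
            rw [hr', mul_assoc, horth j i hj, mul_zero])
          (fun h => absurd (Finset.mem_univ i) h), hci]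
      exact h1.symm
  · -- each piece is a domain
    intro i
    rw [hival]
    refine ⟨hane i, ?_⟩
    intro x y hx hy hxy
    have hkill : ∀ z, z ∈ Ideal.span {a i} → z ∈ Pf i → z = 0 := by
      intro z hz hzp
      obtain ⟨r, hr⟩ := Ideal.mem_span_singleton.mp hz
      have hzall : ∀ j, z ∈ Pf j := by
        intro j
        rcases eq_or_ne j i with h | h
        · exact h ▸ hzp
        · have h2 : a i ∈ Pf j := hIle i j h (haI i)
          rw [hr]
          exact Ideal.mul_mem_right _ _ h2
      have h3 : z ∈ Finset.univ.inf Pf := (hmemInf _ _).mpr fun j _ => hzall j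
      rw [hJall] at h3
      exact (Submodule.mem_bot R).mp h3
    have h0 : x * y ∈ Pf i := hxy ▸ Submodule.zero_mem _
    rcases (hPfprime i).mem_or_mem h0 with h | h
    · exact Or.inl (hkill x hx h)
    · exact Or.inr (hkill y hy h)

end KeyLemma

/-- Any Picard–Vessiot extension decomposes as a finite direct sum
`R = ⊕_{j=0}^{t-1} φ^j(e) R` for some idempotent `e` with `φ^t(e) = e`,
where each `φ^j(e) R` is an integral domain. -/
theorem statement1
    {k : Type u} [Field k] [CharZero k] (φk : k ≃+* k)
    (hk_real : IsRealRing k)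
    (hC_rc : IsRealClosedField (↥(fixedSubfield φk)))
    {n : ℕ} (A : Matrix (Fin n) (Fin n) k) (hA : IsUnit A.det)
    (R : Type v) [CommRing R] [Algebra k R] (φR : R ≃+* R)
    (hPV : IsPicardVessiot k R φk φR A) :
    ∃ (e : R) (t : ℕ), 0 < t ∧ IsIdempotentElem e ∧ (⇑φR)^[t] e = e ∧
      (∀ y : R, ∃! c : Fin t → R,
        (∀ i : Fin t, c i ∈ Ideal.span {(⇑φR)^[(i : ℕ)] e}) ∧ y = ∑ i, c i) ∧
      (∀ i : Fin t, (⇑φR)^[(i : ℕ)] e ≠ 0 ∧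
        ∀ a b : R, a ∈ Ideal.span {(⇑φR)^[(i : ℕ)] e} → b ∈ Ideal.span {(⇑φR)^[(i : ℕ)] e} →
          a * b = 0 → a = 0 ∨ b = 0) := by
  obtain ⟨hnt, -, ⟨U, -, hgen⟩, hsimple⟩ := hPV
  haveI : Nontrivial R := hnt
  have hfin : Set.Finite ((Set.range fun p : Fin n × Fin n => U p.1 p.2) ∪
      {Ring.inverse U.det}) :=
    (Set.finite_range _).union (Set.finite_singleton _)
  haveI : Algebra.FiniteType k R :=
    ⟨hfin.toFinset, by rw [Set.Finite.coe_toFinset]; exact hgen⟩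
  haveI : IsNoetherianRing R := Algebra.FiniteType.isNoetherianRing k R
  exact key_decomp φR hsimple
end

section
/- Let (R, φ) be a real Picard–Vessiot extension for the system φY = AY over (k, φ). Then the ring of constants of R equals C, i.e. R^φ = k^φ = C; in particular (R, φ) is a weak Picard–Vessiot extension for φY = AY over (k, φ). -/
universe u v w x

open scoped TensorProduct

open Polynomial

set_option maxHeartbeats 1000000 in
set_option synthInstance.maxHeartbeats 400000 in
/-- If `R` is a nontrivial finitely generated algebra over a field `k`, and `b ∈ R` is such
that `b - a` is a unit for all `a` in an infinite subset `T` of `k`, then `b` is algebraic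
over `k`. -/
theorem aux_algebraic {k : Type u} [Field k] {R : Type v} [CommRing R] [Algebra k R]
    [Nontrivial R] (t : Finset R) (ht : Algebra.adjoin k (↑t : Set R) = ⊤)
    (b : R) (T : Set k) (hT : T.Infinite)
    (hu : ∀ a ∈ T, IsUnit (b - algebraMap k R a)) :
    ∃ p : k[X], p ≠ 0 ∧ Polynomial.aeval b p = 0 := by
  by_contra hcon
  push_neg at hcon
  -- the evaluation map k[X] → R at b
  set ev : k[X] →+* R := (Polynomial.aeval b).toRingHom with hev
  have hev_inj : ∀ p : k[X], p ≠ 0 → ev p ≠ 0 := fun p hp => hcon p hp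
  -- the multiplicative set S = ev(k[X] \ {0}) in R
  set S : Submonoid R := (nonZeroDivisors k[X]).map (ev : k[X] →* R) with hS
  have hS_ne : ∀ s ∈ S, s ≠ (0 : R) := by
    rintro s ⟨p, hp, rfl⟩
    exact hev_inj p (nonZeroDivisors.ne_zero hp)
  -- the localization of R at S
  set Rl := Localization S with hRl
  haveI : Nontrivial Rl := by
    refine ⟨0, 1, fun h01 => ?_⟩
    have h1 : (algebraMap R Rl) 1 = 0 := by rw [map_one]; exact h01.symm
    rw [IsLocalization.map_eq_zero_iff S] at h1
    obtain ⟨m, hm⟩ := h1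
    exact hS_ne m.1 m.2 (by simpa using hm)
  obtain ⟨m, hm⟩ := Ideal.exists_maximal Rl
  haveI := hm
  set L := Rl ⧸ m with hL
  letI : Field L := Ideal.Quotient.field m
  -- the map ψ : R → L
  set ψ : R →+* L := (Ideal.Quotient.mk m).comp (algebraMap R Rl) with hψ
  -- image of S is invertible in L
  have hψS : ∀ s ∈ S, IsUnit (ψ s) := by
    intro s hs
    have : IsUnit (algebraMap R Rl s) := IsLocalization.map_units Rl ⟨s, hs⟩
    exact this.map (Ideal.Quotient.mk m)
  set g : k[X] →+* L := ψ.comp ev with hg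
  have hg_unit : ∀ p : k[X], p ≠ 0 → IsUnit (g p) := by
    intro p hp
    exact hψS (ev p) ⟨p, mem_nonZeroDivisors_of_ne_zero hp, rfl⟩
  have hg_inj : Function.Injective g := by
    rw [injective_iff_map_eq_zero]
    intro p hp
    by_contra hp0
    exact (hg_unit p hp0).ne_zero hp
  -- the fraction field K = k(X), and the induced map K → L
  set K := FractionRing k[X] with hK
  set gK : K →+* L := IsFractionRing.lift hg_inj with hgK
  have hgK_alg : ∀ p : k[X], gK (algebraMap k[X] K p) = g p := fun p =>
    IsFractionRing.lift_algebraMap hg_inj p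
  letI : Algebra K L := gK.toAlgebra
  have halgKL : (algebraMap K L) = gK := rfl
  -- k-algebra structures
  have hψk : ∀ a : k, ψ (algebraMap k R a) = g (Polynomial.C a) := by
    intro a
    simp only [hg, RingHom.comp_apply]
    congr 1
    simp [hev]
  have hcommute : ∀ a : k, ψ (algebraMap k R a) = algebraMap k L a := by
    intro a
    rw [hψ, RingHom.comp_apply, IsScalarTower.algebraMap_apply k Rl L a,
      IsScalarTower.algebraMap_apply k R Rl a]
    rfl
  haveI : IsScalarTower k K L := IsScalarTower.of_algebraMap_eq' (by
    ext a
    show algebraMap k L a = gK (algebraMap k K a)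
    rw [← hcommute a, hψk a, IsScalarTower.algebraMap_apply k k[X] K a, hgK_alg,
      Polynomial.algebraMap_eq])
  -- ψ as a k-algebra homomorphism
  set ψa : R →ₐ[k] L := { ψ with commutes' := fun a => hcommute a } with hψa
  -- L is finitely generated over K
  have hLft : Algebra.adjoin K (⇑ψ '' (↑t : Set R)) = ⊤ := by
    set W : Subalgebra K L := Algebra.adjoin K (⇑ψ '' (↑t : Set R)) with hW
    have hψW : ∀ r : R, ψ r ∈ W := by
      intro r
      have hr : r ∈ Algebra.adjoin k (↑t : Set R) := ht ▸ Algebra.mem_top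
      have hle : Algebra.adjoin k (↑t : Set R) ≤ (W.restrictScalars k).comap ψa := by
        apply Algebra.adjoin_le
        intro x hx
        exact Algebra.subset_adjoin ⟨x, hx, rfl⟩
      exact hle hr
    rw [eq_top_iff]
    intro y _
    obtain ⟨z, rfl⟩ := Ideal.Quotient.mk_surjective (I := m) y
    obtain ⟨⟨r, s⟩, hrs⟩ := IsLocalization.mk'_surjective S z
    have hrs : IsLocalization.mk' Rl r s = z := hrs
    have hspec : Ideal.Quotient.mk m z * ψ s.1 = ψ r := by
      rw [hψ]
      show Ideal.Quotient.mk m z * Ideal.Quotient.mk m (algebraMap R Rl s.1) = _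
      rw [← map_mul, ← hrs, IsLocalization.mk'_spec]
      rfl
    obtain ⟨p, hp, hps⟩ := s.2
    have hp0 : p ≠ 0 := nonZeroDivisors.ne_zero hp
    have hpK : algebraMap k[X] K p ≠ 0 := fun h =>
      hp0 (IsFractionRing.to_map_eq_zero_iff.mp h)
    have hps' : ev p = s.1 := hps
    have hψs : ψ s.1 = algebraMap K L (algebraMap k[X] K p) := by
      rw [halgKL, hgK_alg, hg, ← hps']
      rfl
    have hy : Ideal.Quotient.mk m z =
        ψ r * algebraMap K L (algebraMap k[X] K p)⁻¹ := by
      have hunit : algebraMap K L (algebraMap k[X] K p) ≠ 0 := by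
        rw [halgKL]
        exact fun h => hpK (gK.injective (by rw [h, map_zero]))
      field_simp [map_inv₀]
      rw [map_inv₀, eq_mul_inv_iff_mul_eq₀ hunit, ← hψs, hspec]
    rw [hy]
    exact mul_mem (hψW r) (W.algebraMap_mem _)
  -- Zariski's lemma: L is finite over K, hence integral
  haveI : IsJacobsonRing K := inferInstance
  haveI : Algebra.FiniteType K L := by
    classical
    exact ⟨⟨t.image ψ, by rw [Finset.coe_image]; exact hLft⟩⟩
  haveI : Module.Finite K L := finite_of_finite_type_of_isJacobsonRing K L
  haveI : Algebra.IsIntegral K L := Algebra.IsIntegral.of_finite K L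
  -- choose monic annihilating polynomials over K for all elements of ψ(R)
  have hPex : ∀ r : R, ∃ P : K[X], P.Monic ∧ Polynomial.eval₂ (algebraMap K L) (ψ r) P = 0 :=
    fun r => Algebra.IsIntegral.isIntegral (ψ r)
  choose P hPmonic hPeval using hPex
  -- common denominator for the coefficients of the polynomials of the generators
  classical
  set bigFinset : Finset K := t.biUnion (fun r => (P r).coeffs) with hbig
  obtain ⟨q₀, hq₀⟩ := IsLocalization.exist_integer_multiples_of_finset
    (nonZeroDivisors k[X]) bigFinset
  set q : k[X] := q₀.1 with hq
  have hq_ne : q ≠ 0 := nonZeroDivisors.ne_zero q₀.2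
  have hqK_ne : algebraMap k[X] K q ≠ 0 := fun h => hq_ne (IsFractionRing.to_map_eq_zero_iff.mp h)
  -- the localization A_q = k[X][1/q] and the maps jq : A_q -> K, hA : A_q -> L
  set Aq := Localization.Away q with hAq
  have hq_unitK : IsUnit (algebraMap k[X] K q) := isUnit_iff_ne_zero.mpr hqK_ne
  set jq : Aq →+* K := IsLocalization.Away.lift q hq_unitK with hjq
  have hjq_alg : ∀ p : k[X], jq (algebraMap k[X] Aq p) = algebraMap k[X] K p := fun p =>
    IsLocalization.Away.lift_eq q hq_unitK p
  have hgq_unit : IsUnit (g q) := hg_unit q hq_ne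
  set hA : Aq →+* L := IsLocalization.Away.lift q hgq_unit with hhA
  have hhA_alg : ∀ p : k[X], hA (algebraMap k[X] Aq p) = g p := fun p =>
    IsLocalization.Away.lift_eq q hgq_unit p
  have hA_eq : hA = gK.comp jq := by
    apply IsLocalization.ringHom_ext (Submonoid.powers q)
    refine RingHom.ext fun p => ?_
    simp only [RingHom.comp_apply]
    rw [hhA_alg, hjq_alg, hgK_alg]
  -- every element of K whose q-multiple is integral lies in the range of jq
  have hrange : ∀ c ∈ bigFinset, ∃ z : Aq, jq z = c := by
    intro c hc
    obtain ⟨c', hc'⟩ := hq₀ c hc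
    have hc'' : algebraMap k[X] K c' = algebraMap k[X] K q * c := by
      rw [hc', Algebra.smul_def]
    have huq : IsUnit (algebraMap k[X] Aq q) :=
      IsLocalization.map_units Aq (⟨q, Submonoid.mem_powers q⟩ : Submonoid.powers q)
    refine ⟨algebraMap k[X] Aq c' * ↑huq.unit⁻¹, ?_⟩
    have h1 : jq (↑huq.unit⁻¹) * algebraMap k[X] K q = 1 := by
      have : jq (↑huq.unit⁻¹ * ↑huq.unit) = 1 := by rw [Units.inv_mul]; exact map_one jq
      rwa [map_mul, IsUnit.unit_spec, hjq_alg] at this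
    have : jq (algebraMap k[X] Aq c' * ↑huq.unit⁻¹) * algebraMap k[X] K q
        = algebraMap k[X] K q * c := by
      rw [map_mul, hjq_alg, ← hc'', mul_assoc, h1, mul_one]
    rw [mul_comm (algebraMap k[X] K q) c] at this
    exact mul_right_cancel₀ hqK_ne this
  -- the generators of R have images integral over A_q
  letI : Algebra Aq L := hA.toAlgebra
  have halgAqL : algebraMap Aq L = hA := rfl
  letI : Algebra Aq K := jq.toAlgebra
  have halgAqK : algebraMap Aq K = jq := rfl
  haveI : IsScalarTower Aq K L := IsScalarTower.of_algebraMap_eq' (by rw [halgAqL, halgAqK, halgKL, hA_eq])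
  have hgen_int : ∀ r ∈ t, IsIntegral Aq (ψ r) := by
    intro r hr
    have hlift : P r ∈ Polynomial.lifts jq := by
      rw [Polynomial.lifts_iff_coeff_lifts]
      intro n
      by_cases hn : (P r).coeff n = 0
      · exact ⟨0, by rw [map_zero, hn]⟩
      · have : (P r).coeff n ∈ bigFinset := by
          rw [hbig]
          exact Finset.mem_biUnion.mpr ⟨r, hr, Polynomial.coeff_mem_coeffs hn⟩
        obtain ⟨z, hz⟩ := hrange _ this
        exact ⟨z, hz⟩
    obtain ⟨P', hP'map, _, hP'monic⟩ :=
      Polynomial.lifts_and_degree_eq_and_monic hlift (hPmonic r)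
    refine ⟨P', hP'monic, ?_⟩
    rw [halgAqL, hA_eq]
    rw [← Polynomial.eval₂_map, hP'map]
    rw [← halgKL]
    exact hPeval r
  -- all of ψ(R) is integral over A_q
  haveI : IsScalarTower k Aq L := IsScalarTower.of_algebraMap_eq' (by
    refine RingHom.ext fun a => ?_
    show algebraMap k L a = hA (algebraMap k Aq a)
    rw [IsScalarTower.algebraMap_apply k k[X] Aq a, hhA_alg, Polynomial.algebraMap_eq,
      ← hψk a, hcommute a])
  have hψ_int : ∀ r : R, IsIntegral Aq (ψ r) := by
    intro r
    have hr : r ∈ Algebra.adjoin k (↑t : Set R) := ht ▸ Algebra.mem_top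
    have hle : Algebra.adjoin k (↑t : Set R) ≤
        ((integralClosure Aq L).restrictScalars k).comap ψa := by
      apply Algebra.adjoin_le
      intro x hx
      exact hgen_int x hx
    exact hle hr
  -- choose a ∈ T which is not a root of q
  have hTroots : (T \ {x | q.IsRoot x}).Infinite :=
    hT.diff (Polynomial.finite_setOf_isRoot hq_ne)
  obtain ⟨a, haT, haroot⟩ := hTroots.nonempty
  -- the element X - a of K
  set ca : K := algebraMap k[X] K (X - Polynomial.C a) with hca
  have hXa_ne : (X - Polynomial.C a : k[X]) ≠ 0 := Polynomial.X_sub_C_ne_zero a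
  have hca_ne : ca ≠ 0 := fun h => hXa_ne (IsFractionRing.to_map_eq_zero_iff.mp h)
  -- the inverse of b - a in R
  have hu_a := hu a haT
  set w : R := ↑hu_a.unit⁻¹ with hw
  have hmulw : (b - algebraMap k R a) * w = 1 := by
    rw [hw]
    exact IsUnit.mul_val_inv hu_a
  have hψba : ψ (b - algebraMap k R a) = gK ca := by
    rw [hca, hgK_alg, hg, RingHom.comp_apply]
    show ψ (b - algebraMap k R a) = ψ (ev (X - Polynomial.C a))
    congr 1
    simp [hev]
  have hy1 : gK ca * ψ w = 1 := by rw [← hψba, ← map_mul, hmulw, map_one]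
  have hyy : ψ w = gK (ca⁻¹) := by
    rw [map_inv₀]
    exact eq_inv_of_mul_eq_one_right hy1
  -- ψ w is integral over A_q; transfer the equation to K
  obtain ⟨Pw, hPwmonic, hPweval⟩ := hψ_int w
  have hKeval : Polynomial.eval₂ jq (ca⁻¹) Pw = 0 := by
    apply gK.injective
    rw [map_zero, Polynomial.hom_eval₂, ← hA_eq, ← halgAqL, ← hyy]
    exact hPweval
  -- reverse trick: ca is a root of the reversed polynomial
  haveI hinv : Invertible (ca⁻¹) := invertibleOfNonzero (inv_ne_zero hca_ne)
  have hrev := Polynomial.eval₂_reverse_mul_pow jq (ca⁻¹) Pw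
  rw [hKeval] at hrev
  have hinvOf : (⅟(ca⁻¹) : K) = ca := by
    rw [invOf_eq_inv, inv_inv]
  have hrev0 : Polynomial.eval₂ jq ca Pw.reverse = 0 := by
    rcases mul_eq_zero.mp hrev with h | h
    · rwa [hinvOf] at h
    · exact absurd h (pow_ne_zero _ (inv_ne_zero hca_ne))
  -- split off the constant coefficient 1 of the reverse
  have h0 : Pw.reverse.coeff 0 = 1 := by
    rw [Polynomial.coeff_zero_reverse]
    exact hPwmonic.leadingCoeff
  have hsplit : Polynomial.X * Pw.reverse.divX + Polynomial.C (1 : Aq) = Pw.reverse := by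
    conv_rhs => rw [← Polynomial.X_mul_divX_add Pw.reverse]
    rw [h0]
  have hE : ca * Polynomial.eval₂ jq ca (Pw.reverse.divX) + 1 = 0 := by
    have h2 : Polynomial.eval₂ jq ca (Polynomial.X * Pw.reverse.divX + Polynomial.C 1) = 0 := by
      rw [hsplit]; exact hrev0
    simpa [Polynomial.eval₂_add, Polynomial.eval₂_mul, Polynomial.eval₂_X,
      Polynomial.eval₂_C] using h2
  -- so ca⁻¹ is in the range of jq
  set tA : Aq := algebraMap k[X] Aq (X - Polynomial.C a) with htA
  have hjq_tA : jq tA = ca := hjq_alg _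
  set zE : Aq := Polynomial.eval₂ (RingHom.id Aq) tA (Pw.reverse.divX) with hzE
  have hEexpr : Polynomial.eval₂ jq ca (Pw.reverse.divX) = jq zE := by
    rw [hzE, Polynomial.hom_eval₂, RingHom.comp_id, hjq_tA]
  set z' : Aq := -zE with hz'
  have hz'inv : ca * jq z' = 1 := by
    have h3 : ca * jq zE = -1 := by
      rw [← hEexpr]
      exact eq_neg_of_add_eq_zero_left hE
    rw [hz', map_neg, mul_neg, h3, neg_neg]
  -- write z' = pnum / q^mexp and pull the equation back to k[X]
  obtain ⟨⟨pnum, s⟩, hmk⟩ := IsLocalization.mk'_surjective (Submonoid.powers q) z'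
  have hmk : IsLocalization.mk' Aq pnum s = z' := hmk
  obtain ⟨mexp, hs⟩ := s.2
  have hspec2 : z' * algebraMap k[X] Aq s.1 = algebraMap k[X] Aq pnum := by
    rw [← hmk, IsLocalization.mk'_spec]
  have hKspec : jq z' * algebraMap k[X] K s.1 = algebraMap k[X] K pnum := by
    have := congrArg jq hspec2
    rwa [map_mul, hjq_alg, hjq_alg] at this
  have hKfin : algebraMap k[X] K s.1 = algebraMap k[X] K ((X - Polynomial.C a) * pnum) := by
    rw [map_mul, ← hKspec, ← mul_assoc]
    rw [← hca, hz'inv, one_mul]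
  have hfinal : s.1 = (X - Polynomial.C a) * pnum := IsFractionRing.injective k[X] K hKfin
  rw [← hs] at hfinal
  -- evaluate at a
  have heval := congrArg (Polynomial.eval a) hfinal
  rw [Polynomial.eval_pow, Polynomial.eval_mul, Polynomial.eval_sub, Polynomial.eval_X,
    Polynomial.eval_C, sub_self, zero_mul] at heval
  have hqa : Polynomial.eval a q ≠ 0 := haroot
  rcases Nat.eq_zero_or_pos mexp with hm | hm
  · rw [hm, pow_zero] at heval
    exact one_ne_zero heval
  · exact hqa ((pow_eq_zero_iff hm.ne').mp heval)

set_option maxHeartbeats 1600000 in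
set_option synthInstance.maxHeartbeats 400000 in
/-- The ring of constants of a real Picard–Vessiot extension `(R, φ)` for `φ Y = A Y`
over `(k, φ)` equals `C = k^φ`: every constant of `R` comes from a constant of `k`.
In particular `(R, φ)` is a weak Picard–Vessiot extension. -/
theorem statement3
    {k : Type u} [Field k] [CharZero k] (φk : k ≃+* k)
    (hk_real : IsRealRing k)
    (hC_rc : IsRealClosedField (↥(fixedSubfield φk)))
    {n : ℕ} (A : Matrix (Fin n) (Fin n) k) (hA : IsUnit A.det)
    (R : Type v) [CommRing R] [Algebra k R] (φR : R ≃+* R)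
    (hPV : IsPicardVessiot k R φk φR A)
    (hRreal : IsRealRing R) :
    ∀ r : R, φR r = r ↔ ∃ c : k, φk c = c ∧ algebraMap k R c = r := by
  classical
  obtain ⟨hnt, hcompat, ⟨U, hU, hgen⟩, hsimple⟩ := hPV
  -- nonzero constants are units
  have hconst_unit : ∀ s : R, φR s = s → s ≠ 0 → IsUnit s := by
    intro s hs hs0
    have hdiff : IsDiffIdeal φR (Ideal.span {s}) := by
      intro y hy
      rw [Ideal.mem_span_singleton'] at hy ⊢
      obtain ⟨a, rfl⟩ := hy
      exact ⟨φR a, by rw [map_mul, hs]⟩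
    rcases hsimple _ hdiff with hbot | htop
    · have hsmem : s ∈ Ideal.span ({s} : Set R) := Ideal.subset_span (Set.mem_singleton s)
      rw [hbot] at hsmem
      exact absurd (by simpa using hsmem) hs0
    · have h1 : (1 : R) ∈ Ideal.span ({s} : Set R) := htop ▸ Submodule.mem_top
      rw [Ideal.mem_span_singleton'] at h1
      obtain ⟨a, ha⟩ := h1
      exact IsUnit.of_mul_eq_one (a := s) a (by rw [mul_comm]; exact ha)
  -- a finite generating set for R over k
  have hfin : ((Set.range fun p : Fin n × Fin n => U p.1 p.2) ∪
      {Ring.inverse U.det}).Finite :=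
    (Set.finite_range _).union (Set.finite_singleton _)
  set t : Finset R := hfin.toFinset with htdef
  have ht : Algebra.adjoin k (↑t : Set R) = ⊤ := by
    rw [htdef, Set.Finite.coe_toFinset]
    exact hgen
  -- the set of constants of k is infinite
  set Csub := fixedSubfield φk with hCsub
  haveI : CharZero ↥Csub := by
    constructor
    intro a b h
    have := congrArg (algebraMap ↥Csub k) h
    simpa using this
  haveI : Infinite ↥Csub := inferInstance
  set T : Set k := (Csub : Set k) with hTdef
  have hTinf : T.Infinite := by
    have hTr : T = Set.range ((↑) : ↥Csub → k) := (Subtype.range_coe).symm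
    rw [hTr]
    exact Set.infinite_range_of_injective Subtype.val_injective
  have hTfix : ∀ a ∈ T, φk a = a := fun a ha => ha
  intro r
  constructor
  swap
  · rintro ⟨c, hc, rfl⟩
    rw [hcompat, hc]
  intro hr
  -- case distinction: either r is already of the required form
  by_cases hcase : ∃ a ∈ T, r - algebraMap k R a = 0
  · obtain ⟨a, haT, ha0⟩ := hcase
    exact ⟨a, hTfix a haT, by rw [← sub_eq_zero, ← neg_sub, ha0, neg_zero]⟩
  push_neg at hcase
  -- otherwise r - a is a nonzero constant, hence a unit, for all constants a of k
  have hu : ∀ a ∈ T, IsUnit (r - algebraMap k R a) := by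
    intro a haT
    refine hconst_unit _ ?_ (hcase a haT)
    rw [map_sub, hr, hcompat, hTfix a haT]
  -- hence r is algebraic over k
  obtain ⟨p, hp0, hpr⟩ := aux_algebraic t ht r T hTinf hu
  have hint : IsIntegral k r := IsAlgebraic.isIntegral ⟨p, hp0, hpr⟩
  -- the minimal polynomial of r over k has coefficients fixed by φk
  set m := minpoly k r with hmdef
  have hm_ne : m ≠ 0 := minpoly.ne_zero hint
  have hφRalg : (φR : R →+* R).comp (algebraMap k R) =
      (algebraMap k R).comp (φk : k →+* k) := RingHom.ext fun c => hcompat c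
  have hr' : (φR : R →+* R) r = r := hr
  have hm'eval : Polynomial.aeval r (m.map (φk : k →+* k)) = 0 := by
    have h1 : (φR : R →+* R) (Polynomial.eval₂ (algebraMap k R) r m) = 0 := by
      have : Polynomial.eval₂ (algebraMap k R) r m = 0 := by
        rw [← Polynomial.aeval_def]; exact minpoly.aeval k r
      rw [this, map_zero]
    rw [Polynomial.hom_eval₂, hφRalg, hr'] at h1
    rw [Polynomial.aeval_def, Polynomial.eval₂_map]
    exact h1
  have hm'monic : (m.map (φk : k →+* k)).Monic := (minpoly.monic hint).map _
  have hmm : m.map (φk : k →+* k) = m := by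
    obtain ⟨cpol, hc⟩ := minpoly.dvd k r hm'eval
    have hm'ne : m.map (φk : k →+* k) ≠ 0 := hm'monic.ne_zero
    have hcne : cpol ≠ 0 := by
      intro h
      rw [h, mul_zero] at hc
      exact hm'ne hc
    have hdeg : (m.map (φk : k →+* k)).natDegree = m.natDegree :=
      (minpoly.monic hint).natDegree_map _
    have hdeg2 : cpol.natDegree = 0 := by
      have hnd := Polynomial.natDegree_mul hm_ne hcne
      rw [← hc, hdeg] at hnd
      omega
    have hlc : cpol.leadingCoeff = 1 := by
      have h1 : (m.map (φk : k →+* k)).leadingCoeff = 1 := hm'monic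
      rw [hc, Polynomial.leadingCoeff_mul, (minpoly.monic hint).leadingCoeff, one_mul] at h1
      exact h1
    have hcpol1 : cpol = 1 := by
      rw [Polynomial.eq_C_of_natDegree_eq_zero hdeg2]
      rw [Polynomial.leadingCoeff, hdeg2] at hlc
      rw [hlc, Polynomial.C_1]
    rw [hc, hcpol1, mul_one]
  have hcoef : ∀ i, φk (m.coeff i) = m.coeff i := by
    intro i
    conv_rhs => rw [← hmm]
    rw [Polynomial.coeff_map]
    rfl
  -- descend the minimal polynomial to the constants Csub
  letI : Algebra ↥Csub R :=
    { algebraMap := (algebraMap k R).comp (algebraMap ↥Csub k)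
      smul := (· • ·)
      commutes' := fun c r => by
        show ((algebraMap k R) ↑c) * r = r * ((algebraMap k R) ↑c)
        exact Algebra.commutes (↑c : k) r
      smul_def' := fun c r => by
        show (↑c : k) • r = (algebraMap k R) ↑c * r
        rw [Algebra.smul_def] }
  haveI : IsScalarTower ↥Csub k R :=
    IsScalarTower.of_algebraMap_eq' (rfl : algebraMap ↥Csub R = (algebraMap k R).comp (algebraMap ↥Csub k))
  have hlifts : m ∈ Polynomial.lifts (algebraMap ↥Csub k) := by
    rw [Polynomial.lifts_iff_coeff_lifts]
    intro i
    exact ⟨⟨m.coeff i, hcoef i⟩, rfl⟩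
  obtain ⟨m₀, hm₀map, _, hm₀monic⟩ :=
    Polynomial.lifts_and_degree_eq_and_monic hlifts (minpoly.monic hint)
  have hm₀eval : Polynomial.aeval r m₀ = 0 := by
    rw [← Polynomial.aeval_map_algebraMap k r m₀, hm₀map, minpoly.aeval]
  have hint₀ : IsIntegral ↥Csub r :=
    ⟨m₀, hm₀monic, by rw [← Polynomial.aeval_def]; exact hm₀eval⟩
  -- evaluation of polynomials over Csub at r gives constants
  have hCeval : ∀ f : Polynomial ↥Csub, φR (Polynomial.aeval r f) = Polynomial.aeval r f := by
    intro f
    have hcomp : (φR : R →+* R).comp (algebraMap ↥Csub R) = algebraMap ↥Csub R := by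
      refine RingHom.ext fun c => ?_
      show φR ((algebraMap k R) ((algebraMap ↥Csub k) c)) = _
      rw [hcompat]
      have : φk ((algebraMap ↥Csub k) c) = (algebraMap ↥Csub k) c := c.2
      rw [this]
      rfl
    have h2 := Polynomial.hom_eval₂ f (algebraMap ↥Csub R) (φR : R →+* R) r
    rw [hcomp, hr'] at h2
    rw [Polynomial.aeval_def]
    exact h2
  -- the minimal polynomial over Csub is irreducible
  set μ := minpoly ↥Csub r with hμdef
  have hμ_ne : μ ≠ 0 := minpoly.ne_zero hint₀
  have hμpos : 0 < μ.natDegree := minpoly.natDegree_pos hint₀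
  have hirr : Irreducible μ := by
    constructor
    · intro hunit
      rw [Polynomial.natDegree_eq_zero_of_isUnit hunit] at hμpos
      exact lt_irrefl 0 hμpos
    · intro f g' hfg
      have hfne : f ≠ 0 := by
        intro h
        rw [h, zero_mul] at hfg
        exact hμ_ne hfg
      have hgne : g' ≠ 0 := by
        intro h
        rw [h, mul_zero] at hfg
        exact hμ_ne hfg
      have hndsum : μ.natDegree = f.natDegree + g'.natDegree := by
        rw [hfg]
        exact Polynomial.natDegree_mul hfne hgne
      have h0 : Polynomial.aeval r f * Polynomial.aeval r g' = 0 := by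
        rw [← map_mul, ← hfg, minpoly.aeval]
      have hunit_of_deg0 : ∀ h : Polynomial ↥Csub, h ≠ 0 → h.natDegree = 0 → IsUnit h := by
        intro h hne hd
        rw [Polynomial.eq_C_of_natDegree_eq_zero hd]
        refine Polynomial.isUnit_C.mpr (isUnit_iff_ne_zero.mpr ?_)
        intro hc0
        apply hne
        rw [Polynomial.eq_C_of_natDegree_eq_zero hd, hc0, Polynomial.C_0]
      by_cases hf0 : Polynomial.aeval r f = 0
      · right
        have hdvd : μ ∣ f := minpoly.dvd ↥Csub r hf0
        have hle : μ.natDegree ≤ f.natDegree := Polynomial.natDegree_le_of_dvd hdvd hfne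
        exact hunit_of_deg0 g' hgne (by omega)
      · left
        have hunit : IsUnit (Polynomial.aeval r f) := hconst_unit _ (hCeval f) hf0
        have hg0 : Polynomial.aeval r g' = 0 := (IsUnit.mul_right_eq_zero hunit).mp h0
        have hdvd : μ ∣ g' := minpoly.dvd ↥Csub r hg0
        have hle : μ.natDegree ≤ g'.natDegree := Polynomial.natDegree_le_of_dvd hdvd hgne
        exact hunit_of_deg0 f hfne (by omega)
  -- the field L = Csub[X]/(μ), a real algebraic extension of Csub
  haveI hfact : Fact (Irreducible μ) := ⟨hirr⟩
  set L := AdjoinRoot μ with hLdef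
  haveI : Module.Finite ↥Csub L := (AdjoinRoot.powerBasis hμ_ne).finite
  haveI halgc : Algebra.IsAlgebraic ↥Csub L := Algebra.IsAlgebraic.of_finite ↥Csub L
  have hμeval2 : Polynomial.eval₂ (algebraMap ↥Csub R) r μ = 0 := by
    rw [← Polynomial.aeval_def]
    exact minpoly.aeval ↥Csub r
  set ε : L →+* R := AdjoinRoot.lift (algebraMap ↥Csub R) r hμeval2 with hεdef
  have hε_inj : Function.Injective ε := ε.injective
  have hLreal : IsRealRing L := by
    intro mm f hf hsum
    refine hRreal mm (fun i => ε (f i)) (fun i h0 => hf i (hε_inj (by simpa using h0))) ?_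
    have : ε (∑ i, f i ^ 2) = 0 := by rw [hsum, map_zero]
    rw [map_sum] at this
    simpa [map_pow] using this
  obtain ⟨c₀, hc₀⟩ := hC_rc.2 L halgc hLreal (AdjoinRoot.root μ)
  refine ⟨c₀.1, c₀.2, ?_⟩
  have h1 : ε (algebraMap ↥Csub L c₀) = r := by rw [hc₀]; exact AdjoinRoot.lift_root hμeval2
  rw [AdjoinRoot.algebraMap_eq, AdjoinRoot.lift_of] at h1
  exact h1
end

section
/- Let (R, φ) be a real Picard–Vessiot extension for the system φY = AY over (k, φ) with fundamental matrix U ∈ GL_n(R). Let G_{R[i]} be the group of difference ring automorphisms of R[i] fixing k[i] pointwise, and let G := {ψ|_R : ψ ∈ G_{R[i]}} be the real difference Galois group. Then for every ψ ∈ G the matrix U⁻¹ψ(U) lies in GL_n(C[i]), and the map ρ_U : ψ ↦ U⁻¹ψ(U) is an injective group homomorphism from G to GL_n(C[i]). -/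
universe u v w x

open scoped TensorProduct

open Polynomial

section Helpers

variable {k : Type*} [CommRing k] {L : Type*} [CommRing L] [Algebra k L]

lemma helper_int (Bs : Subalgebra k L) (x : L) (q : L[X]) (hq : q.Monic)
    (h0 : q.eval x = 0) (hc : ∀ i, q.coeff i ∈ Bs) : IsIntegral (↥Bs) x := by
  classical
  let q' : Polynomial ↥Bs :=
    ∑ i ∈ Finset.range (q.natDegree + 1), monomial i (⟨q.coeff i, hc i⟩ : ↥Bs)
  have hmap : q'.map (algebraMap ↥Bs L) = q := by
    conv_rhs => rw [q.as_sum_range' (q.natDegree + 1) (Nat.lt_succ_self _)]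
    simp only [q', Polynomial.map_sum, Polynomial.map_monomial]
    rfl
  refine ⟨q', ?_, ?_⟩
  · apply Polynomial.monic_of_injective (f := algebraMap ↥Bs L) Subtype.val_injective
    rw [hmap]; exact hq
  · rw [Polynomial.eval₂_eq_eval_map, hmap]
    exact h0

lemma unit_trick (Bs : Subalgebra k L) {u v : L} (hu : u ∈ Bs) (huv : u * v = 1)
    (hint : IsIntegral (↥Bs) v) : ∃ z ∈ Bs, u * z = 1 := by
  classical
  obtain ⟨p, pm, hp⟩ := hint
  have hqmonic : (p.map (algebraMap ↥Bs L)).Monic := pm.map _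
  have hqeval : (p.map (algebraMap ↥Bs L)).eval v = 0 := by
    rw [← Polynomial.eval₂_eq_eval_map]; exact hp
  set q : L[X] := p.map (algebraMap ↥Bs L) with hqdef
  have key : (0 : L) =
      ∑ i ∈ Finset.range (q.natDegree + 1), q.coeff i * u ^ (q.natDegree - i) := by
    have h1 : q.eval v = ∑ i ∈ Finset.range (q.natDegree + 1), q.coeff i * v ^ i :=
      Polynomial.eval_eq_sum_range (p := q) v
    have h2 : (0 : L) = u ^ q.natDegree * q.eval v := by rw [hqeval, mul_zero]
    rw [h2, h1, Finset.mul_sum]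
    refine Finset.sum_congr rfl fun i hi => ?_
    have hile : i ≤ q.natDegree := Nat.lt_succ_iff.mp (Finset.mem_range.mp hi)
    have h5 : u ^ q.natDegree * v ^ i = u ^ (q.natDegree - i) := by
      have : u ^ q.natDegree = u ^ (q.natDegree - i) * u ^ i := by
        rw [← pow_add, Nat.sub_add_cancel hile]
      rw [this, mul_assoc, ← mul_pow, huv, one_pow, mul_one]
    calc u ^ q.natDegree * (q.coeff i * v ^ i)
        = q.coeff i * (u ^ q.natDegree * v ^ i) := by ring
      _ = q.coeff i * u ^ (q.natDegree - i) := by rw [h5]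
  have hcoeffn : q.coeff q.natDegree = 1 := hqmonic.coeff_natDegree
  rw [Finset.sum_range_succ, hcoeffn, Nat.sub_self, pow_zero, mul_one] at key
  refine ⟨∑ i ∈ Finset.range q.natDegree, -(q.coeff i) * u ^ (q.natDegree - 1 - i), ?_, ?_⟩
  · refine Subalgebra.sum_mem _ fun i _ => ?_
    refine Subalgebra.mul_mem _ (Subalgebra.neg_mem _ ?_) (Subalgebra.pow_mem _ hu _)
    have : q.coeff i = ((p.coeff i : ↥Bs) : L) := by simp [hqdef]
    rw [this]; exact SetLike.coe_mem _
  · have h3 : (1 : L) = -∑ i ∈ Finset.range q.natDegree, q.coeff i * u ^ (q.natDegree - i) := by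
      linear_combination -key
    rw [Finset.mul_sum]
    have h4 : ∀ i ∈ Finset.range q.natDegree, u * (-(q.coeff i) * u ^ (q.natDegree - 1 - i)) =
        -(q.coeff i * u ^ (q.natDegree - i)) := by
      intro i hi
      have hin : i < q.natDegree := Finset.mem_range.mp hi
      have h6 : q.natDegree - i = (q.natDegree - 1 - i) + 1 := by omega
      rw [h6, pow_succ]
      ring
    rw [Finset.sum_congr rfl h4, Finset.sum_neg_distrib, ← h3]

end Helpers

section Key

set_option maxHeartbeats 2000000 in
lemma key_no_transcendental
    {k : Type u} [Field k] {A : Type v} [CommRing A] [IsDomain A] [Algebra k A]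
    (s : Finset A) (hgen : Algebra.adjoin k (s : Set A) = ⊤)
    (t : A) (htr : ∀ q : k[X], q ≠ 0 → aeval t q ≠ 0)
    (S : Set k) (hS : S.Infinite)
    (hunit : ∀ a ∈ S, IsUnit (t - algebraMap k A a)) : False := by
  classical
  let j : k[X] →+* A := (aeval t).toRingHom
  have hj : ∀ q : k[X], j q = aeval t q := fun _ => rfl
  let M : Submonoid A := Submonoid.map j (nonZeroDivisors k[X])
  have hMle : M ≤ nonZeroDivisors A := by
    rintro _ ⟨q, hq, rfl⟩
    exact mem_nonZeroDivisors_iff_ne_zero.mpr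
      (htr q (mem_nonZeroDivisors_iff_ne_zero.mp hq))
  let AK := Localization M
  haveI hdom : IsDomain AK := IsLocalization.isDomain_localization hMle
  let K := FractionRing k[X]
  have hsub : nonZeroDivisors k[X] ≤ Submonoid.comap j M := fun q hq =>
    Submonoid.mem_map_of_mem j hq
  let gK : K →+* AK := IsLocalization.map (M := nonZeroDivisors k[X]) AK j hsub
  obtain ⟨m, hmmax⟩ := Ideal.exists_maximal AK
  haveI := hmmax
  let L := AK ⧸ m
  letI : Field L := Ideal.Quotient.field m
  let πA : A →+* L := (Ideal.Quotient.mk m).comp (algebraMap A AK)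
  let β : K →+* L := (Ideal.Quotient.mk m).comp gK
  letI : Algebra K L := β.toAlgebra
  have halgKL : ∀ c : K, algebraMap K L c = β c := fun _ => rfl
  have hcommK : gK.comp (algebraMap k[X] K) = (algebraMap A AK).comp j :=
    IsLocalization.map_comp hsub
  have hcomm : ∀ q : k[X], πA (j q) = β (algebraMap k[X] K q) := by
    intro q
    have h1 : gK (algebraMap k[X] K q) = algebraMap A AK (j q) := by
      have := congrArg (fun h : k[X] →+* AK => h q) hcommK
      simpa using this
    show (Ideal.Quotient.mk m) (algebraMap A AK (j q)) = (Ideal.Quotient.mk m) (gK _)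
    rw [h1]
  have hβinj : Function.Injective β := β.injective
  have hBKinj : Function.Injective (algebraMap k[X] K) := IsFractionRing.injective _ _
  let βB : k[X] →+* L := β.comp (algebraMap k[X] K)
  have hβBinj : Function.Injective βB := hβinj.comp hBKinj
  have hcommB : ∀ q : k[X], πA (j q) = βB q := hcomm
  letI : Algebra k L := (πA.comp (algebraMap k A)).toAlgebra
  have halgkL : ∀ r : k, algebraMap k L r = πA (algebraMap k A r) := fun _ => rfl
  have hCr : ∀ r : k, πA (algebraMap k A r) = βB (C r) := by
    intro r
    have : j (C r) = algebraMap k A r := by rw [hj, aeval_C]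
    rw [← this, hcommB]
  -- every πA-image lies in the K-subalgebra generated by the images of s
  have hadj : ∀ z : A, πA z ∈ Algebra.adjoin K (↑(s.image πA) : Set L) := by
    intro z
    have hz : z ∈ Algebra.adjoin k (s : Set A) := by rw [hgen]; trivial
    induction hz using Algebra.adjoin_induction with
    | mem x hx => exact Algebra.subset_adjoin (by simpa using Finset.mem_image_of_mem πA hx)
    | algebraMap r =>
        rw [hCr r]
        have hrfl : βB (C r) = algebraMap K L (algebraMap k[X] K (C r)) := rfl
        rw [hrfl]
        exact Subalgebra.algebraMap_mem _ _
    | add x y hx hy ihx ihy => rw [map_add]; exact Subalgebra.add_mem _ ihx ihy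
    | mul x y hx hy ihx ihy => rw [map_mul]; exact Subalgebra.mul_mem _ ihx ihy
  haveI hFT : Algebra.FiniteType K L := by
    refine ⟨⟨s.image πA, le_antisymm le_top ?_⟩⟩
    rintro y -
    obtain ⟨zak, rfl⟩ := Ideal.Quotient.mk_surjective (I := m) y
    obtain ⟨⟨a, q⟩, hmk⟩ := IsLocalization.mk'_surjective M zak
    replace hmk : IsLocalization.mk' AK a q = zak := hmk
    obtain ⟨q', hq', hjq⟩ := q.2
    have hspec := IsLocalization.mk'_spec AK a q
    rw [hmk] at hspec
    have hspec' : (Ideal.Quotient.mk m) zak * πA (q : A) = πA a :=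
      congrArg (Ideal.Quotient.mk m) hspec
    have hq0 : q' ≠ 0 := mem_nonZeroDivisors_iff_ne_zero.mp hq'
    have hc : πA (q : A) = βB q' := by rw [← hjq]; exact hcommB q'
    have hcne : βB q' ≠ 0 := fun h => hq0 (hβBinj (by rw [h, map_zero]))
    have hy : (Ideal.Quotient.mk m) zak = πA a * (βB q')⁻¹ := by
      rw [← hspec', hc]
      field_simp
    rw [hy]
    refine Subalgebra.mul_mem _ (hadj a) ?_
    have : (βB q')⁻¹ = algebraMap K L (algebraMap k[X] K q')⁻¹ := by
      rw [halgKL, map_inv₀]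
      rfl
    rw [this]
    exact Subalgebra.algebraMap_mem _ _
  haveI hfin : Module.Finite K L := finite_of_finite_type_of_isJacobsonRing K L
  -- common denominator for the coefficients of the minimal polynomials
  let T : Finset K := s.biUnion fun x => (minpoly K (πA x)).coeffs
  have hden : ∀ c ∈ T, ∃ gd : k[X] × k[X], gd.2 ≠ 0 ∧
      c = algebraMap k[X] K gd.1 / algebraMap k[X] K gd.2 := by
    intro c _
    obtain ⟨g, d, hd, hc⟩ := IsFractionRing.div_surjective (A := k[X]) c
    exact ⟨⟨g, d⟩, mem_nonZeroDivisors_iff_ne_zero.mp hd, hc.symm⟩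
  choose gd hdne hceq using hden
  let f : k[X] := ∏ c ∈ T.attach, (gd c.1 c.2).2
  have hf0 : f ≠ 0 := Finset.prod_ne_zero_iff.mpr fun c _ => hdne c.1 c.2
  have hfK0 : algebraMap k[X] K f ≠ 0 := fun h => hf0 (hBKinj (by rw [h, map_zero]))
  let w : L := β (algebraMap k[X] K f)⁻¹
  have hwf : βB f * w = 1 := by
    show β _ * β _ = 1
    rw [← map_mul, mul_inv_cancel₀ hfK0, map_one]
  have hfw : ∀ n : ℕ, βB (f ^ n) * w ^ n = 1 := by
    intro n
    rw [map_pow, ← mul_pow, hwf, one_pow]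
  -- the subalgebra k[X][1/f] (image in L)
  let Bsub : Subalgebra k L :=
    { carrier := {x | ∃ g : k[X], ∃ n : ℕ, x = βB g * w ^ n}
      mul_mem' := by
        rintro x y ⟨g₁, n₁, rfl⟩ ⟨g₂, n₂, rfl⟩
        exact ⟨g₁ * g₂, n₁ + n₂, by rw [map_mul, pow_add]; ring⟩
      one_mem' := ⟨1, 0, by simp⟩
      add_mem' := by
        rintro x y ⟨g₁, n₁, rfl⟩ ⟨g₂, n₂, rfl⟩
        refine ⟨g₁ * f ^ n₂ + g₂ * f ^ n₁, n₁ + n₂, ?_⟩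
        rw [map_add, map_mul, map_mul, add_mul, pow_add]
        have e1 : βB g₁ * βB (f ^ n₂) * (w ^ n₁ * w ^ n₂) = βB g₁ * w ^ n₁ := by
          calc βB g₁ * βB (f ^ n₂) * (w ^ n₁ * w ^ n₂)
              = βB g₁ * w ^ n₁ * (βB (f ^ n₂) * w ^ n₂) := by ring
            _ = βB g₁ * w ^ n₁ := by rw [hfw n₂, mul_one]
        have e2 : βB g₂ * βB (f ^ n₁) * (w ^ n₁ * w ^ n₂) = βB g₂ * w ^ n₂ := by
          calc βB g₂ * βB (f ^ n₁) * (w ^ n₁ * w ^ n₂)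
              = βB g₂ * w ^ n₂ * (βB (f ^ n₁) * w ^ n₁) := by ring
            _ = βB g₂ * w ^ n₂ := by rw [hfw n₁, mul_one]
        rw [← e1, ← e2]
      zero_mem' := ⟨0, 0, by simp⟩
      algebraMap_mem' := fun r => ⟨C r, 0, by rw [halgkL, hCr, pow_zero, mul_one]⟩ }
  have hmemBsub : ∀ (g : k[X]) (n : ℕ), βB g * w ^ n ∈ Bsub := fun g n => ⟨g, n, rfl⟩
  -- coefficients of the minimal polynomials belong to Bsub
  have hcoeffT : ∀ c ∈ T, algebraMap K L c ∈ Bsub := by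
    intro c hc
    obtain ⟨G, D, hD0, hcGD, hDf⟩ : ∃ G D : k[X], D ≠ 0 ∧
        c = algebraMap k[X] K G / algebraMap k[X] K D ∧ D ∣ f :=
      ⟨(gd c hc).1, (gd c hc).2, hdne c hc, hceq c hc,
        Finset.dvd_prod_of_mem _ (Finset.mem_attach T ⟨c, hc⟩)⟩
    obtain ⟨e, hfe⟩ := hDf
    have hd0 : algebraMap k[X] K D ≠ 0 := fun h => hD0 (hBKinj (by rw [h, map_zero]))
    have hcK : c * algebraMap k[X] K f = algebraMap k[X] K (G * e) := by
      rw [hfe, map_mul, map_mul, hcGD]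
      rw [div_mul_eq_mul_div, div_eq_iff hd0]
      ring
    have hβc : algebraMap K L c * βB f = βB (G * e) := by
      show β c * β _ = β _
      rw [← map_mul, hcK]
    have hfinal : algebraMap K L c = βB (G * e) * w := by
      calc algebraMap K L c = algebraMap K L c * (βB f * w) := by rw [hwf, mul_one]
        _ = (algebraMap K L c * βB f) * w := by ring
        _ = βB (G * e) * w := by rw [hβc]
    rw [hfinal]
    exact ⟨_, 1, by rw [pow_one]⟩
  -- each generator image is integral over Bsub
  have hxint : ∀ x ∈ s, IsIntegral (↥Bsub) (πA x) := by
    intro x hx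
    have hix : IsIntegral K (πA x) := IsIntegral.of_finite K _
    refine helper_int Bsub (πA x) ((minpoly K (πA x)).map (algebraMap K L)) 
      ((minpoly.monic hix).map _) ?_ ?_
    · rw [← Polynomial.eval₂_eq_eval_map]
      exact minpoly.aeval K (πA x)
    · intro i
      rw [Polynomial.coeff_map]
      rcases eq_or_ne ((minpoly K (πA x)).coeff i) 0 with h | h
      · rw [h, map_zero]; exact Subalgebra.zero_mem _
      · refine hcoeffT _ (Finset.mem_biUnion.mpr ⟨x, hx, ?_⟩)
        exact Polynomial.coeff_mem_coeffs h
  -- every πA-image is integral over Bsub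
  have hπint : ∀ z : A, IsIntegral (↥Bsub) (πA z) := by
    intro z
    have hz : z ∈ Algebra.adjoin k (s : Set A) := by rw [hgen]; trivial
    induction hz using Algebra.adjoin_induction with
    | mem x hx => exact hxint x hx
    | algebraMap r =>
        rw [hCr r]
        have : βB (C r) ∈ Bsub := ⟨C r, 0, by rw [pow_zero, mul_one]⟩
        exact isIntegral_algebraMap (x := (⟨βB (C r), this⟩ : ↥Bsub))
    | add x y hx hy ihx ihy => rw [map_add]; exact ihx.add ihy
    | mul x y hx hy ihx ihy => rw [map_mul]; exact ihx.mul ihy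
  -- choose a good specialization point
  obtain ⟨a, haS, hanr⟩ := hS.exists_notMem_finite (Polynomial.finite_setOf_isRoot hf0)
  obtain hu := hunit a haS
  have huv : (t - algebraMap k A a) * ↑hu.unit⁻¹ = 1 := hu.mul_val_inv
  have hπu : πA (t - algebraMap k A a) = βB (X - C a) := by
    have h1 : πA t = βB X := by
      have : j X = t := by rw [hj, aeval_X]
      rw [← this, hcommB]
    rw [map_sub, h1, hCr, map_sub]
  have hπumem : πA (t - algebraMap k A a) ∈ Bsub := by
    rw [hπu]; exact ⟨X - C a, 0, by rw [pow_zero, mul_one]⟩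
  have hπuv : πA (t - algebraMap k A a) * πA (↑hu.unit⁻¹ : A) = 1 := by
    rw [← map_mul, huv, map_one]
  obtain ⟨z, hz, huz⟩ := unit_trick Bsub hπumem hπuv (hπint _)
  obtain ⟨g, nn, rfl⟩ := hz
  have hmain : βB ((X - C a) * g) = βB (f ^ nn) := by
    have h2 : βB (X - C a) * (βB g * w ^ nn) * βB (f ^ nn) = βB (f ^ nn) := by
      rw [← hπu, huz, one_mul]
    calc βB ((X - C a) * g) = βB ((X - C a) * g) * (βB (f ^ nn) * w ^ nn) := by
          rw [hfw nn, mul_one]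
      _ = βB (X - C a) * (βB g * w ^ nn) * βB (f ^ nn) := by rw [map_mul]; ring
      _ = βB (f ^ nn) := h2
  have heq : (X - C a) * g = f ^ nn := hβBinj hmain
  have := congrArg (Polynomial.eval a) heq
  rw [Polynomial.eval_mul, Polynomial.eval_sub, Polynomial.eval_X, Polynomial.eval_C,
    sub_self, zero_mul, Polynomial.eval_pow] at this
  rcases Nat.eq_zero_or_pos nn with h0 | hpos
  · rw [h0, pow_zero] at this
    exact one_ne_zero this.symm
  · exact hanr (pow_eq_zero_iff hpos.ne' |>.mp this.symm)

end Key


section Constants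

open Polynomial

universe u' v'

theorem constants_lemma
    {k : Type u'} [Field k] [CharZero k] (φk : k ≃+* k)
    (hC_rc : IsRealClosedField (↥(fixedSubfield φk)))
    {R : Type v'} [CommRing R] [Algebra k R] (φR : R ≃+* R)
    (hnt : Nontrivial R) (hcompat : DiffCompat R φk φR)
    (hsimple : IsSimpleDiffRing φR) (hRreal : IsRealRing R)
    (hfg : ∃ s : Finset R, Algebra.adjoin k (↑s : Set R) = ⊤)
    (x : R) (hx : φR x = x) : ∃ a : k, φk a = a ∧ algebraMap k R a = x := by
  classical
  obtain ⟨s, hs⟩ := hfg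
  -- nonzero constants are units
  have hconstunit : ∀ z : R, φR z = z → z ≠ 0 → IsUnit z := by
    intro z hz hz0
    have hdiff : IsDiffIdeal φR (Ideal.span {z}) := by
      intro y hy
      obtain ⟨r, hr⟩ := Ideal.mem_span_singleton'.mp hy
      refine Ideal.mem_span_singleton'.mpr ⟨φR r, ?_⟩
      rw [← hz, ← map_mul, hr]
    rcases hsimple _ hdiff with h | h
    · exact absurd (h ▸ Ideal.mem_span_singleton_self z) (by simp [hz0])
    · have : (1 : R) ∈ Ideal.span {z} := h ▸ Submodule.mem_top
      obtain ⟨r, hr⟩ := Ideal.mem_span_singleton'.mp this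
      exact IsUnit.of_mul_eq_one (a := z) r (by rw [mul_comm]; exact hr)
  have hmapfix : ∀ a : k, φR (algebraMap k R a) = algebraMap k R (φk a) := hcompat
  -- the set of φk-fixed elements is infinite
  have hSinf : ({a : k | φk a = a}).Infinite := by
    apply Set.infinite_of_injective_forall_mem (f := fun n : ℕ => (n : k))
    · exact Nat.cast_injective
    · intro n; exact map_natCast (φk : k →+* k) n
  -- x is algebraic over k
  have halg : ∃ q : k[X], q ≠ 0 ∧ aeval x q = 0 := by
    by_contra hcon
    push_neg at hcon
    have htr : ∀ q : k[X], q ≠ 0 → aeval x q ≠ 0 := hcon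
    -- pass to a quotient domain
    let jx : k[X] →+* R := (aeval x).toRingHom
    let M : Submonoid R := Submonoid.map jx (nonZeroDivisors k[X])
    have hM0 : ∀ z ∈ M, z ≠ 0 := by
      rintro _ ⟨q, hq, rfl⟩
      exact htr q (mem_nonZeroDivisors_iff_ne_zero.mp hq)
    let Loc := Localization M
    haveI : Nontrivial Loc := by
      refine nontrivial_of_ne 1 0 fun h10 => ?_
      have : algebraMap R Loc 1 = algebraMap R Loc 0 := by simpa using h10
      obtain ⟨c, hc⟩ := (IsLocalization.eq_iff_exists M Loc).mp this
      simp only [mul_one, mul_zero] at hc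
      exact hM0 _ c.2 hc
    obtain ⟨mm, hmm⟩ := Ideal.exists_maximal Loc
    let p : Ideal R := mm.comap (algebraMap R Loc)
    haveI := hmm.isPrime
    haveI hpprime : p.IsPrime := Ideal.IsPrime.comap _
    have hdisj : ∀ z ∈ M, z ∉ p := by
      intro z hz hzp
      have : IsUnit (algebraMap R Loc z) := IsLocalization.map_units Loc ⟨z, hz⟩
      exact hmm.ne_top (Ideal.eq_top_of_isUnit_mem _ hzp this)
    let D := R ⧸ p
    haveI : IsDomain D := Ideal.Quotient.isDomain p
    let mk : R →ₐ[k] D := Ideal.Quotient.mkₐ k p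
    have hmk : Function.Surjective mk := Ideal.Quotient.mkₐ_surjective k p
    have hgen : Algebra.adjoin k (↑(s.image mk) : Set D) = ⊤ := by
      rw [Finset.coe_image, Algebra.adjoin_image, hs]
      rw [Algebra.map_top]
      exact (AlgHom.range_eq_top _).mpr hmk
    have htr' : ∀ q : k[X], q ≠ 0 → aeval (mk x) q ≠ 0 := by
      intro q hq0
      rw [Polynomial.aeval_algHom_apply]
      intro hzero
      have : aeval x q ∈ p := by
        have := (Ideal.Quotient.eq_zero_iff_mem (I := p)).mp hzero
        exact this
      exact hdisj _ (Submonoid.mem_map_of_mem jx (mem_nonZeroDivisors_iff_ne_zero.mpr hq0)) this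
    refine key_no_transcendental (s.image mk) hgen (mk x) htr' _ hSinf ?_
    intro a ha
    have hxa0 : x - algebraMap k R a ≠ 0 := by
      intro h
      refine htr (X - C a) (Polynomial.X_sub_C_ne_zero a) ?_
      rw [map_sub, aeval_X, aeval_C]
      exact h
    have hxafix : φR (x - algebraMap k R a) = x - algebraMap k R a := by
      rw [map_sub, hx, hmapfix, ha]
    have : IsUnit (x - algebraMap k R a) := hconstunit _ hxafix hxa0
    have := this.map mk
    rw [map_sub] at this
    have halgk : mk (algebraMap k R a) = algebraMap k D a := mk.commutes a
    rw [halgk] at this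
    exact this
  -- minimal polynomial over k has φk-fixed coefficients
  obtain ⟨q0, hq00, hq0x⟩ := halg
  have hint : IsIntegral k x := (IsAlgebraic.isIntegral ⟨q0, hq00, hq0x⟩)
  set g := minpoly k x with hgdef
  have hgmonic : g.Monic := minpoly.monic hint
  have haevalmap : ∀ p : k[X], aeval x (p.map (φk : k →+* k)) = φR (aeval x p) := by
    intro p
    induction p using Polynomial.induction_on' with
    | add p q hp hq => simp only [Polynomial.map_add, map_add, hp, hq]
    | monomial n a =>
        rw [Polynomial.map_monomial, Polynomial.aeval_monomial, Polynomial.aeval_monomial,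
          map_mul, map_pow, hx, hmapfix]
        rfl
  have hgφ : g.map (φk : k →+* k) = g := by
    have hmono : (g.map (φk : k →+* k)).Monic := hgmonic.map _
    have hann : aeval x (g.map (φk : k →+* k)) = 0 := by
      rw [haevalmap, minpoly.aeval, map_zero]
    have hdeg : (g.map (φk : k →+* k)).degree = g.degree :=
      Polynomial.degree_map_eq_of_injective (φk : k →+* k).injective g
    have h8 : ∀ q : k[X], q.Monic → aeval x q = 0 →
        (g.map (φk : k →+* k)).degree ≤ q.degree := by
      intro q hqm hq
      rw [hdeg]
      exact minpoly.min k x hqm hq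
    exact minpoly.unique k x hmono hann h8
  have hgfix : ∀ i, φk (g.coeff i) = g.coeff i := by
    intro i
    have := congrArg (fun p : k[X] => p.coeff i) hgφ
    simpa [Polynomial.coeff_map] using this
  -- set up the subfield of constants
  set Csub := fixedSubfield φk with hCsub
  letI : Algebra (↥Csub) R := ((algebraMap k R).comp Csub.subtype).toAlgebra
  have halgC : ∀ c : ↥Csub, algebraMap (↥Csub) R c = algebraMap k R ↑c := fun _ => rfl
  -- x is integral over Csub
  let gC : Polynomial ↥Csub :=
    ∑ i ∈ Finset.range (g.natDegree + 1), monomial i (⟨g.coeff i, hgfix i⟩ : ↥Csub)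
  have hgCmap : gC.map Csub.subtype = g := by
    conv_rhs => rw [g.as_sum_range' (g.natDegree + 1) (Nat.lt_succ_self _)]
    simp only [gC, Polynomial.map_sum, Polynomial.map_monomial]
    rfl
  have hgCmonic : gC.Monic := by
    apply Polynomial.monic_of_injective (f := Csub.subtype) Subtype.val_injective
    rw [hgCmap]; exact hgmonic
  have haevalC : ∀ p : Polynomial ↥Csub, aeval (R := ↥Csub) x p = aeval x (p.map Csub.subtype) := by
    intro p
    rw [Polynomial.aeval_def, Polynomial.aeval_def, Polynomial.eval₂_map]
    rfl
  have hintC : IsIntegral (↥Csub) x := by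
    refine ⟨gC, hgCmonic, ?_⟩
    have : aeval (R := ↥Csub) x gC = 0 := by
      rw [haevalC, hgCmap]
      exact minpoly.aeval k x
    exact this
  set h := minpoly (↥Csub) x with hhdef
  have hhmonic : h.Monic := minpoly.monic hintC
  have hh0 : h ≠ 0 := minpoly.ne_zero hintC
  -- polynomials over Csub evaluate to constants
  have hconstC : ∀ p : Polynomial ↥Csub, φR (aeval (R := ↥Csub) x p) = aeval (R := ↥Csub) x p := by
    intro p
    induction p using Polynomial.induction_on' with
    | add p q hp hq => rw [map_add, map_add, hp, hq]
    | monomial n a =>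
        rw [Polynomial.aeval_monomial, map_mul, map_pow, hx, halgC, hmapfix, a.2]
  -- h is irreducible
  have hirr : Irreducible h := by
    constructor
    · intro hu
      obtain ⟨d, hd⟩ := Polynomial.isUnit_iff.mp hu
      have h5 : aeval (R := ↥Csub) x h = algebraMap (↥Csub) R d := by
        rw [← hd.2, aeval_C]
      rw [minpoly.aeval] at h5
      have hd0 : d = 0 := ((algebraMap (↥Csub) R).injective (by rw [← h5, map_zero])).symm
      exact hd.1.ne_zero hd0
    · intro p q hpq
      have h0 : aeval (R := ↥Csub) x p * aeval (R := ↥Csub) x q = 0 := by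
        rw [← map_mul, ← hpq, hhdef]
        exact minpoly.aeval _ x
      have hcase : aeval (R := ↥Csub) x p = 0 ∨ aeval (R := ↥Csub) x q = 0 := by
        by_contra hcc
        push_neg at hcc
        have hup := hconstunit _ (hconstC p) hcc.1
        have huq := hconstunit _ (hconstC q) hcc.2
        exact (hup.mul huq).ne_zero h0
      rcases hcase with hp0 | hq0
      · have hdvd : h ∣ p := minpoly.dvd _ x hp0
        obtain ⟨r, hr⟩ := hdvd
        right
        have h6 : h * (r * q) = h * 1 := by
          rw [mul_one, ← mul_assoc, ← hr, ← hpq]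
        exact IsUnit.of_mul_eq_one (a := q) r
          (by rw [mul_comm]; exact mul_left_cancel₀ hh0 h6)
      · have hdvd : h ∣ q := minpoly.dvd _ x hq0
        obtain ⟨r, hr⟩ := hdvd
        left
        have h6 : h * (r * p) = h * 1 := by
          conv_rhs => rw [mul_one, hpq, hr]
          ring
        exact IsUnit.of_mul_eq_one (a := p) r
          (by rw [mul_comm]; exact mul_left_cancel₀ hh0 h6)
  -- the field Csub[X]/(h) embeds into R
  haveI : Fact (Irreducible h) := ⟨hirr⟩
  let F := AdjoinRoot h
  have heval : Polynomial.eval₂ (algebraMap (↥Csub) R) x h = 0 := by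
    have := minpoly.aeval (↥Csub) x
    rwa [Polynomial.aeval_def] at this
  let θ : F →+* R := AdjoinRoot.lift (algebraMap (↥Csub) R) x heval
  have hθinj : Function.Injective θ := θ.injective
  have hFreal : IsRealRing F := by
    intro m ff hff hsum
    refine hRreal m (fun i => θ (ff i)) (fun i => ?_) ?_
    · intro h0
      refine hff i (hθinj ?_)
      rw [map_zero]
      exact h0
    · rw [← map_zero θ, ← hsum, map_sum]
      simp [map_pow]
  haveI : Module.Finite (↥Csub) F := PowerBasis.finite (AdjoinRoot.powerBasis hh0)
  haveI halgF : Algebra.IsAlgebraic (↥Csub) F := Algebra.IsAlgebraic.of_finite _ _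
  have hsurj : Function.Surjective (algebraMap (↥Csub) F) := hC_rc.2 F halgF hFreal
  obtain ⟨c, hc⟩ := hsurj (AdjoinRoot.root h)
  have hroot : aeval c h = 0 := by
    have h2 : algebraMap (↥Csub) F (aeval c h) = 0 := by
      rw [← Polynomial.aeval_algebraMap_apply, hc, Polynomial.aeval_def]
      exact AdjoinRoot.eval₂_root h
    exact (algebraMap (↥Csub) F).injective (by rw [h2, map_zero])
  have hroot' : h.eval c = 0 := by
    have : aeval c h = h.eval c := by
      simp [Polynomial.aeval_def, Polynomial.eval₂_eq_eval_map]
    rwa [this] at hroot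
  -- h = X - C c
  obtain ⟨u, hu⟩ := (Polynomial.dvd_iff_isRoot.mpr hroot' : X - C c ∣ h)
  have huunit : IsUnit u := by
    rcases hirr.isUnit_or_isUnit hu with h1 | h1
    · exact absurd h1 (Polynomial.not_isUnit_X_sub_C c)
    · exact h1
  obtain ⟨d, hd⟩ := Polynomial.isUnit_iff.mp huunit
  have hlead : h.leadingCoeff = 1 := hhmonic
  rw [hu, ← hd.2] at hlead
  rw [Polynomial.leadingCoeff_mul, Polynomial.leadingCoeff_X_sub_C, one_mul,
    Polynomial.leadingCoeff_C] at hlead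
  have hh : h = X - C c := by
    rw [hu, ← hd.2, hlead, map_one, mul_one]
  have hfinal : x - algebraMap (↥Csub) R c = 0 := by
    have h7 := minpoly.aeval (↥Csub) x
    rw [← hhdef, hh, map_sub, aeval_X, aeval_C] at h7
    exact h7
  exact ⟨(c : k), c.2, by rw [← halgC]; exact (sub_eq_zero.mp hfinal).symm⟩

end Constants


section MatrixHelpers

lemma matmul_map {n : ℕ} {α β : Type*} [CommRing α] [CommRing β] (f : α → β)
    (hf : ∃ g : α →+* β, ⇑g = f) (M N : Matrix (Fin n) (Fin n) α) :
    (M * N).map f = M.map f * N.map f := by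
  obtain ⟨g, rfl⟩ := hf
  exact Matrix.map_mul

lemma matdet_map {n : ℕ} {α β : Type*} [CommRing α] [CommRing β] (f : α → β)
    (hf : ∃ g : α →+* β, ⇑g = f) (M : Matrix (Fin n) (Fin n) α) :
    (M.map f).det = f M.det := by
  obtain ⟨g, rfl⟩ := hf
  rw [← RingHom.mapMatrix_apply, ← RingHom.map_det]

lemma matinv_map {n : ℕ} {α β : Type*} [CommRing α] [CommRing β] (f : α → β)
    (hf : ∃ g : α →+* β, ⇑g = f) (M : Matrix (Fin n) (Fin n) α) (h : IsUnit M.det) :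
    (M.map f)⁻¹ = M⁻¹.map f := by
  obtain ⟨g, rfl⟩ := hf
  apply Matrix.inv_eq_left_inv
  rw [← Matrix.map_mul, Matrix.nonsing_inv_mul M h, Matrix.map_one _ (map_zero g) (map_one g)]

end MatrixHelpers


/-- For a real Picard–Vessiot extension `(R, φ)` with fundamental matrix `U`, the map
`ρ_U : ψ ↦ U⁻¹ψ(U)` on the real difference Galois group `G` (restrictions to `R` of the
difference automorphisms of `R[i]` fixing `k[i]` pointwise) takes values in `GL_n(C[i])`
and is an injective group homomorphism. -/
theorem statement7
    {k : Type u} [Field k] [CharZero k] (φk : k ≃+* k)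
    (hk_real : IsRealRing k)
    (hC_rc : IsRealClosedField (↥(fixedSubfield φk)))
    {n : ℕ} (A : Matrix (Fin n) (Fin n) k) (hA : IsUnit A.det)
    (R : Type v) [CommRing R] [Algebra k R] (φR : R ≃+* R)
    (hPV : IsPicardVessiot k R φk φR A) (hRreal : IsRealRing R)
    (U : Matrix (Fin n) (Fin n) R) (hU : IsFundamentalMatrix φR A U)
    (hUgen : GeneratedByFund k U)
    (Ri : Type w) [CommRing Ri] [Algebra R Ri] [Algebra k Ri] [IsScalarTower k R Ri]
    (j : Ri) (hRi : IsAdjoinI R Ri j)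
    (φi : Ri ≃+* Ri) (hcompat : DiffCompat Ri φR φi) (hφj : φi j = j) :
    -- `GCond ψ` : `ψ` is a difference automorphism of `R[i]` fixing `k[i]` pointwise
    let GCond : (Ri ≃+* Ri) → Prop := fun ψ =>
      (∀ y : Ri, ψ (φi y) = φi (ψ y)) ∧
      (∀ c : k, ψ (algebraMap k Ri c) = algebraMap k Ri c) ∧ ψ j = j
    -- `ρ ψ = U⁻¹ ψ(U)` computed in `R[i]`
    let ρ : (Ri ≃+* Ri) → Matrix (Fin n) (Fin n) Ri := fun ψ =>
      (U.map (algebraMap R Ri))⁻¹ * U.map fun r => ψ (algebraMap R Ri r)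
    -- `ρ ψ ∈ GL_n(C[i])`
    (∀ ψ, GCond ψ →
      (∀ p q : Fin n, ∃ a b : k, φk a = a ∧ φk b = b ∧
        ρ ψ p q = algebraMap k Ri a + algebraMap k Ri b * j) ∧ IsUnit (ρ ψ).det) ∧
    -- `ρ` is a group homomorphism: `ρ (ψ₁ ∘ ψ₂) = ρ ψ₁ * ρ ψ₂`
    (∀ ψ₁ ψ₂, GCond ψ₁ → GCond ψ₂ → ρ (ψ₂.trans ψ₁) = ρ ψ₁ * ρ ψ₂) ∧
    -- `ρ` is injective on `G`, the group of restrictions to `R`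
    (∀ ψ₁ ψ₂, GCond ψ₁ → GCond ψ₂ → ρ ψ₁ = ρ ψ₂ →
      ∀ r : R, ψ₁ (algebraMap R Ri r) = ψ₂ (algebraMap R Ri r)) := by
  
  intro GCond ρ
  classical
  obtain ⟨hnt, hcompatR, _hfund, hsimple⟩ := hPV
  have hUgen' : Algebra.adjoin k
      ((Set.range fun p : Fin n × Fin n => U p.1 p.2) ∪ {Ring.inverse U.det}) = ⊤ := hUgen
  let ι : R →+* Ri := algebraMap R Ri
  let Ui : Matrix (Fin n) (Fin n) Ri := U.map ⇑ι
  have hρ : ∀ ψ : Ri ≃+* Ri, ρ ψ = Ui⁻¹ * (U.map fun r => ψ (ι r)) := fun _ => rfl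
  have hdetU : IsUnit U.det := hU.1
  have hfund : U.map ⇑φR = A.map (algebraMap k R) * U := hU.2
  have hdetUi : IsUnit Ui.det := by
    have h := hdetU.map ι
    rwa [RingHom.map_det, RingHom.mapMatrix_apply] at h
  -- the constants of R are C
  have hfg : ∃ s : Finset R, Algebra.adjoin k (↑s : Set R) = ⊤ := by
    have hfin : ((Set.range fun p : Fin n × Fin n => U p.1 p.2) ∪
        {Ring.inverse U.det}).Finite := (Set.finite_range _).union (Set.finite_singleton _)
    exact ⟨hfin.toFinset, by rw [Set.Finite.coe_toFinset]; exact hUgen'⟩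
  have hconstR : ∀ x : R, φR x = x → ∃ a : k, φk a = a ∧ algebraMap k R a = x :=
    constants_lemma φk hC_rc φR hnt hcompatR hsimple hRreal hfg
  -- the constants of Ri are C[i]
  have hconstRi : ∀ e : Ri, φi e = e →
      ∃ a b : k, φk a = a ∧ φk b = b ∧ e = algebraMap k Ri a + algebraMap k Ri b * j := by
    intro e he
    obtain ⟨⟨xx, yy⟩, hxy, huniq⟩ := hRi.2 e
    have h2 : e = ι (φR xx) + ι (φR yy) * j := by
      conv_lhs => rw [← he, hxy]
      rw [map_add, map_mul, hφj, hcompat, hcompat]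
    have h3 : (φR xx, φR yy) = (xx, yy) := huniq (φR xx, φR yy) h2
    have hxfix : φR xx = xx := congrArg Prod.fst h3
    have hyfix : φR yy = yy := congrArg Prod.snd h3
    obtain ⟨a, haf, hax⟩ := hconstR xx hxfix
    obtain ⟨b, hbf, hbx⟩ := hconstR yy hyfix
    refine ⟨a, b, haf, hbf, ?_⟩
    rw [hxy, ← hax, ← hbx, IsScalarTower.algebraMap_apply k R Ri,
      IsScalarTower.algebraMap_apply k R Ri]
  -- the difference equation over Ri
  have hUiφ : Ui.map ⇑φi = A.map (algebraMap k Ri) * Ui := by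
    have h2 : Ui.map ⇑φi = (U.map ⇑φR).map ⇑ι := by
      ext p q
      simp only [Matrix.map_apply]
      exact hcompat (U p q)
    rw [h2, hfund, matmul_map ⇑ι ⟨ι, rfl⟩]
    congr 1
    ext p q
    simp only [Matrix.map_apply]
    exact (IsScalarTower.algebraMap_apply k R Ri (A p q)).symm
  have hdetAi : IsUnit ((A.map (algebraMap k Ri)).det) := by
    have h := hA.map (algebraMap k Ri)
    rwa [RingHom.map_det, RingHom.mapMatrix_apply] at h
  -- part 1
  have hpart1 : ∀ ψ, GCond ψ →
      (∀ p q : Fin n, ∃ a b : k, φk a = a ∧ φk b = b ∧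
        ρ ψ p q = algebraMap k Ri a + algebraMap k Ri b * j) ∧ IsUnit (ρ ψ).det := by
    intro ψ hψ
    have e1 : (U.map fun r => ψ (ι r)).map ⇑φi = (Ui.map ⇑φi).map ⇑ψ := by
      ext p q
      simp only [Matrix.map_apply]
      exact (hψ.1 (ι (U p q))).symm
    have e3 : (A.map (algebraMap k Ri)).map ⇑ψ = A.map (algebraMap k Ri) := by
      ext p q
      simp only [Matrix.map_apply]
      exact hψ.2.1 (A p q)
    have e4 : Ui.map ⇑ψ = U.map fun r => ψ (ι r) := by
      ext p q
      simp only [Ui, Matrix.map_apply]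
    have hψUiφ : (U.map fun r => ψ (ι r)).map ⇑φi =
        A.map (algebraMap k Ri) * (U.map fun r => ψ (ι r)) := by
      rw [e1, hUiφ, matmul_map ⇑ψ ⟨ψ.toRingHom, rfl⟩, e3, e4]
    have hρφ : (ρ ψ).map ⇑φi = ρ ψ := by
      rw [hρ ψ, matmul_map ⇑φi ⟨φi.toRingHom, rfl⟩, ← matinv_map ⇑φi ⟨φi.toRingHom, rfl⟩ Ui hdetUi,
        hUiφ, hψUiφ, Matrix.mul_inv_rev]
      rw [mul_assoc, ← mul_assoc ((A.map (algebraMap k Ri))⁻¹), Matrix.nonsing_inv_mul _ hdetAi,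
        one_mul]
    constructor
    · intro p q
      have hentry : φi (ρ ψ p q) = ρ ψ p q := by
        have := congrArg (fun M : Matrix (Fin n) (Fin n) Ri => M p q) hρφ
        simpa [Matrix.map_apply] using this
      exact hconstRi _ hentry
    · rw [hρ ψ, Matrix.det_mul]
      refine (Matrix.isUnit_nonsing_inv_det Ui hdetUi).mul ?_
      have h5 : (U.map fun r => ψ (ι r)).det = ψ (ι U.det) := by
        rw [matdet_map (fun r => ψ (ι r)) ⟨ψ.toRingHom.comp ι, rfl⟩]
      rw [h5]
      exact (hdetU.map ι).map ψ
  have hUmul : ∀ ψ, GCond ψ → (U.map fun r => ψ (ι r)) = Ui * ρ ψ := by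
    intro ψ hψ
    rw [hρ ψ, ← mul_assoc, Matrix.mul_nonsing_inv Ui hdetUi, one_mul]
  refine ⟨hpart1, ?_, ?_⟩
  · -- group homomorphism
    intro ψ₁ ψ₂ h₁ h₂
    have hψfix : (ρ ψ₂).map ⇑ψ₁ = ρ ψ₂ := by
      ext p q
      simp only [Matrix.map_apply]
      obtain ⟨a, b, haf, hbf, hab⟩ := (hpart1 ψ₂ h₂).1 p q
      rw [hab, map_add, map_mul, h₁.2.1, h₁.2.1, h₁.2.2]
    have hcomp : (U.map fun r => (ψ₂.trans ψ₁) (ι r)) = (U.map fun r => ψ₂ (ι r)).map ⇑ψ₁ := by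
      ext p q
      simp only [Matrix.map_apply, RingEquiv.coe_trans, Function.comp_apply]
    have e4 : Ui.map ⇑ψ₁ = U.map fun r => ψ₁ (ι r) := by
      ext p q
      simp only [Ui, Matrix.map_apply]
    have hstep : (U.map fun r => (ψ₂.trans ψ₁) (ι r)) = Ui * (ρ ψ₁ * ρ ψ₂) := by
      rw [hcomp, hUmul ψ₂ h₂, matmul_map ⇑ψ₁ ⟨ψ₁.toRingHom, rfl⟩, e4, hψfix, hUmul ψ₁ h₁,
        mul_assoc]
    rw [hρ (ψ₂.trans ψ₁), hstep, ← mul_assoc, Matrix.nonsing_inv_mul Ui hdetUi, one_mul]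
  · -- injectivity
    intro ψ₁ ψ₂ h₁ h₂ hρeq r
    have hUeq : (U.map fun r => ψ₁ (ι r)) = U.map fun r => ψ₂ (ι r) := by
      rw [hUmul ψ₁ h₁, hUmul ψ₂ h₂, hρeq]
    have hent : ∀ p q, ψ₁ (ι (U p q)) = ψ₂ (ι (U p q)) := by
      intro p q
      have := congrArg (fun M : Matrix (Fin n) (Fin n) Ri => M p q) hUeq
      simpa [Matrix.map_apply] using this
    let π₁ : R →ₐ[k] Ri :=
      { toRingHom := ψ₁.toRingHom.comp ι
        commutes' := fun c => by
          show ψ₁ (ι (algebraMap k R c)) = algebraMap k Ri c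
          rw [← IsScalarTower.algebraMap_apply k R Ri]
          exact h₁.2.1 c }
    let π₂ : R →ₐ[k] Ri :=
      { toRingHom := ψ₂.toRingHom.comp ι
        commutes' := fun c => by
          show ψ₂ (ι (algebraMap k R c)) = algebraMap k Ri c
          rw [← IsScalarTower.algebraMap_apply k R Ri]
          exact h₂.2.1 c }
    have hdeq : ψ₁ (ι U.det) = ψ₂ (ι U.det) := by
      have h9 : (U.map fun r => ψ₁ (ι r)).det = (U.map fun r => ψ₂ (ι r)).det := by rw [hUeq]
      rwa [matdet_map (fun r => ψ₁ (ι r)) ⟨ψ₁.toRingHom.comp ι, rfl⟩,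
        matdet_map (fun r => ψ₂ (ι r)) ⟨ψ₂.toRingHom.comp ι, rfl⟩] at h9
    have hmulinv : U.det * Ring.inverse U.det = 1 := Ring.mul_inverse_cancel _ hdetU
    have hinv : ψ₁ (ι (Ring.inverse U.det)) = ψ₂ (ι (Ring.inverse U.det)) := by
      calc ψ₁ (ι (Ring.inverse U.det))
          = ψ₁ (ι (Ring.inverse U.det)) * (ψ₂ (ι U.det) * ψ₂ (ι (Ring.inverse U.det))) := by
            rw [← map_mul, ← map_mul, hmulinv, map_one, map_one, mul_one]
        _ = (ψ₁ (ι (Ring.inverse U.det)) * ψ₁ (ι U.det)) * ψ₂ (ι (Ring.inverse U.det)) := by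
            rw [hdeq]; ring
        _ = ψ₂ (ι (Ring.inverse U.det)) := by
            rw [← map_mul, ← map_mul, mul_comm (Ring.inverse U.det), hmulinv, map_one, map_one,
              one_mul]
    have hsub : (Set.range fun p : Fin n × Fin n => U p.1 p.2) ∪ {Ring.inverse U.det} ⊆
        ↑(AlgHom.equalizer π₁ π₂) := by
      rintro z (⟨⟨p, q⟩, rfl⟩ | hz)
      · exact hent p q
      · rw [Set.mem_singleton_iff] at hz
        subst hz
        exact hinv
    have hle : Algebra.adjoin k
        ((Set.range fun p : Fin n × Fin n => U p.1 p.2) ∪ {Ring.inverse U.det}) ≤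
        AlgHom.equalizer π₁ π₂ := Algebra.adjoin_le hsub
    rw [hUgen'] at hle
    exact hle (Algebra.mem_top : r ∈ (⊤ : Subalgebra k R))
end

section
/- Let (R, φ) be a real Picard–Vessiot extension for the system φY = AY over (k, φ) with fundamental matrix U ∈ GL_n(R), let K be the total ring of fractions of R, let G be the real difference Galois group (the restrictions to R of the difference ring automorphisms of R[i] fixing k[i] pointwise), and let G_{K[i]} be the group of difference ring automorphisms of K[i] fixing k[i] pointwise. Then {U⁻¹ψ(U) : ψ ∈ G} = {U⁻¹ψ(U) : ψ ∈ G_{K[i]}} as subsets of GL_n(C[i]). -/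
universe u v w x

open scoped TensorProduct

section AuxLemmas

variable {R : Type*} [CommRing R] {Ri : Type*} [CommRing Ri] [Algebra R Ri] {j : Ri}

theorem IsAdjoinI.rep_inj (h : IsAdjoinI R Ri j) {a b c d : R}
    (heq : algebraMap R Ri a + algebraMap R Ri b * j
         = algebraMap R Ri c + algebraMap R Ri d * j) :
    a = c ∧ b = d := by
  obtain ⟨p, -, hu⟩ := h.2 (algebraMap R Ri a + algebraMap R Ri b * j)
  have h1 : (a, b) = p := hu (a, b) rfl
  have h2 : (c, d) = p := hu (c, d) heq
  have h3 := h1.trans h2.symm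
  exact ⟨congrArg Prod.fst h3, congrArg Prod.snd h3⟩

theorem IsAdjoinI.eq_zero (h : IsAdjoinI R Ri j) {a b : R}
    (heq : algebraMap R Ri a + algebraMap R Ri b * j = 0) : a = 0 ∧ b = 0 := by
  apply h.rep_inj (c := 0) (d := 0)
  rw [heq]; simp

theorem IsAdjoinI.algebraMap_inj (h : IsAdjoinI R Ri j) :
    Function.Injective (algebraMap R Ri) := by
  intro a b hab
  have h0 : algebraMap R Ri (a - b) + algebraMap R Ri 0 * j = 0 := by
    rw [map_sub, hab, map_zero, zero_mul]; ring
  have := (h.eq_zero h0).1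
  exact sub_eq_zero.mp this

theorem IsAdjoinI.map_mem_nonZeroDivisors (h : IsAdjoinI R Ri j) {r : R}
    (hr : r ∈ nonZeroDivisors R) : algebraMap R Ri r ∈ nonZeroDivisors Ri := by
  rw [mem_nonZeroDivisors_iff_right]
  intro y hy
  obtain ⟨⟨a, b⟩, hab, -⟩ := h.2 y
  dsimp only at hab
  rw [hab] at hy ⊢
  have hy' : algebraMap R Ri (a * r) + algebraMap R Ri (b * r) * j = 0 := by
    rw [map_mul, map_mul]; linear_combination hy
  obtain ⟨ha, hb⟩ := h.eq_zero hy'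
  rw [mem_nonZeroDivisors_iff_right] at hr
  rw [hr a ha, hr b hb]; simp

theorem RingEquiv.map_mem_nonZeroDivisors' {A : Type*} [CommRing A] (e : A ≃+* A) {x : A}
    (hx : x ∈ nonZeroDivisors A) : e x ∈ nonZeroDivisors A := by
  rw [mem_nonZeroDivisors_iff_right]
  intro z hz
  have h1 : e.symm z * x = 0 := by
    apply e.injective
    rw [map_mul, map_zero, e.apply_symm_apply]
    exact hz
  have h2 := mem_nonZeroDivisors_iff_right.mp hx _ h1
  calc z = e (e.symm z) := (e.apply_symm_apply z).symm
    _ = e 0 := by rw [h2]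
    _ = 0 := map_zero e

end AuxLemmas

theorem const_matrix_aux {n : ℕ} {S : Type*} [CommRing S]
    (f : S →+* S) (A' V W : Matrix (Fin n) (Fin n) S)
    (hV : V.map ⇑f = A' * V) (hW : W.map ⇑f = A' * W)
    (hVd : IsUnit V.det) (hA'd : IsUnit A'.det) :
    (V⁻¹ * W).map ⇑f = V⁻¹ * W := by
  have hVM : V * (V⁻¹ * W) = W := by
    rw [← Matrix.mul_assoc, Matrix.mul_nonsing_inv _ hVd, Matrix.one_mul]
  have hB : IsUnit (A' * V).det := by
    rw [Matrix.det_mul]; exact hA'd.mul hVd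
  have h2 : (A' * V) * ((V⁻¹ * W).map ⇑f) = (A' * V) * (V⁻¹ * W) := by
    calc (A' * V) * ((V⁻¹ * W).map ⇑f) = V.map ⇑f * (V⁻¹ * W).map ⇑f := by rw [hV]
      _ = (V * (V⁻¹ * W)).map ⇑f := (Matrix.map_mul).symm
      _ = W.map ⇑f := by rw [hVM]
      _ = A' * W := hW
      _ = A' * (V * (V⁻¹ * W)) := by rw [hVM]
      _ = (A' * V) * (V⁻¹ * W) := by rw [Matrix.mul_assoc]
  calc (V⁻¹ * W).map ⇑f = ((A' * V)⁻¹ * (A' * V)) * ((V⁻¹ * W).map ⇑f) := by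
        rw [Matrix.nonsing_inv_mul _ hB, Matrix.one_mul]
    _ = (A' * V)⁻¹ * ((A' * V) * (V⁻¹ * W)) := by rw [Matrix.mul_assoc, h2]
    _ = ((A' * V)⁻¹ * (A' * V)) * (V⁻¹ * W) := by rw [← Matrix.mul_assoc]
    _ = V⁻¹ * W := by rw [Matrix.nonsing_inv_mul _ hB, Matrix.one_mul]

/-- For a real Picard–Vessiot extension `(R, φ)` with fundamental matrix `U` and total
ring of fractions `K`, the real difference Galois group `G` (restrictions of difference
automorphisms of `R[i]` fixing `k[i]`) and the classical difference Galois group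
`G_{K[i]}` (difference automorphisms of `K[i]` fixing `k[i]`) give the same set of
matrices `U⁻¹ψ(U)`. -/
theorem statement8
    {k : Type u} [Field k] [CharZero k] (φk : k ≃+* k)
    (hk_real : IsRealRing k)
    (hC_rc : IsRealClosedField (↥(fixedSubfield φk)))
    {n : ℕ} (A : Matrix (Fin n) (Fin n) k) (hA : IsUnit A.det)
    (R : Type v) [CommRing R] [Algebra k R] (φR : R ≃+* R)
    (hPV : IsPicardVessiot k R φk φR A) (hRreal : IsRealRing R)
    (U : Matrix (Fin n) (Fin n) R) (hU : IsFundamentalMatrix φR A U)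
    (hUgen : GeneratedByFund k U)
    -- `R[i]`
    (Ri : Type w) [CommRing Ri] [Algebra R Ri]
    (j : Ri) (hRi : IsAdjoinI R Ri j)
    (φi : Ri ≃+* Ri) (hcompati : DiffCompat Ri φR φi) (hφj : φi j = j)
    -- `K`, the total ring of fractions of `R`
    (K : Type w) [CommRing K] [Algebra R K] [IsLocalization (nonZeroDivisors R) K]
    (φK : K ≃+* K) (hcompatK : DiffCompat K φR φK)
    -- `K[i]`
    (Ki : Type w) [CommRing Ki] [Algebra K Ki]
    (jK : Ki) (hKi : IsAdjoinI K Ki jK)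
    (φKi : Ki ≃+* Ki) (hcompatKi : DiffCompat Ki φK φKi) (hφjK : φKi jK = jK)
    -- the canonical inclusion `R[i] → K[i]`
    (ι : Ri →+* Ki)
    (hιR : ∀ r : R, ι (algebraMap R Ri r) = algebraMap K Ki (algebraMap R K r))
    (hιj : ι j = jK)
    (hιφ : ∀ y : Ri, ι (φi y) = φKi (ι y)) :
    -- the embedding of `R` into `K[i]`
    let fR : R → Ki := fun r => algebraMap K Ki (algebraMap R K r)
    let fk : k → Ki := fun c => fR (algebraMap k R c)
    -- `{U⁻¹ψ(U) : ψ ∈ G}` = `{U⁻¹Ψ(U) : Ψ ∈ G_{K[i]}}`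
    {M : Matrix (Fin n) (Fin n) Ki | ∃ ψ : Ri ≃+* Ri,
        (∀ y : Ri, ψ (φi y) = φi (ψ y)) ∧
        (∀ c : k, ψ (algebraMap R Ri (algebraMap k R c)) = algebraMap R Ri (algebraMap k R c)) ∧
        ψ j = j ∧
        M = (U.map fR)⁻¹ * U.map fun r => ι (ψ (algebraMap R Ri r))} =
    {M : Matrix (Fin n) (Fin n) Ki | ∃ Ψ : Ki ≃+* Ki,
        (∀ y : Ki, Ψ (φKi y) = φKi (Ψ y)) ∧
        (∀ c : k, Ψ (fk c) = fk c) ∧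
        Ψ jK = jK ∧
        M = (U.map fR)⁻¹ * U.map fun r => Ψ (fR r)} := by

  intro fR fk
  classical
  obtain ⟨hRnt, hcompatR, -, hsimple⟩ := hPV
  haveI : Nontrivial R := hRnt
  -- basic injectivity facts
  have hKinj : Function.Injective (algebraMap R K) :=
    IsLocalization.injective K (le_refl (nonZeroDivisors R))
  have hKKiinj : Function.Injective (algebraMap K Ki) := hKi.algebraMap_inj
  have hιinj : Function.Injective ι := by
    intro x y hxy
    obtain ⟨⟨a, b⟩, hx, -⟩ := hRi.2 x
    obtain ⟨⟨c, d⟩, hy2, -⟩ := hRi.2 y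
    dsimp only at hx hy2
    rw [hx, hy2] at hxy ⊢
    rw [map_add, map_mul, hιR, hιR, hιj, map_add, map_mul, hιR, hιR, hιj] at hxy
    obtain ⟨h1, h2⟩ := hKi.rep_inj hxy
    rw [hKinj h1, hKinj h2]
  -- nonzerodivisors of K are units
  have hKunit : ∀ x : K, x ∈ nonZeroDivisors K → IsUnit x := by
    intro x hx
    obtain ⟨⟨r, s⟩, hrs⟩ := IsLocalization.surj (nonZeroDivisors R) x
    have hrK : algebraMap R K r ∈ nonZeroDivisors K := by
      rw [mem_nonZeroDivisors_iff_right]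
      intro z hz
      dsimp only at hrs
      have h1 : (z * algebraMap R K (s : R)) * x = 0 := by
        linear_combination z * hrs + hz
      have h2 := mem_nonZeroDivisors_iff_right.mp hx _ h1
      have h3 := (IsLocalization.map_units K s).mul_left_eq_zero.mp h2
      exact h3
    have hrR : r ∈ nonZeroDivisors R := by
      rw [mem_nonZeroDivisors_iff_right]
      intro t ht
      apply hKinj
      rw [map_zero]
      exact mem_nonZeroDivisors_iff_right.mp hrK _ (by rw [← map_mul, ht, map_zero])
    have hx1 : IsUnit (x * algebraMap R K (s : R)) := by
      dsimp only at hrs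
      rw [hrs]; exact IsLocalization.map_units K ⟨r, hrR⟩
    exact isUnit_of_mul_isUnit_left hx1
  -- nonzerodivisors of Ki are units
  have hKiunit : ∀ x : Ki, x ∈ nonZeroDivisors Ki → IsUnit x := by
    intro x hx
    obtain ⟨⟨a, b⟩, hab, -⟩ := hKi.2 x
    dsimp only at hab
    have hj2 : jK ^ 2 = -1 := hKi.1
    have hsq : a ^ 2 + b ^ 2 ∈ nonZeroDivisors K := by
      rw [mem_nonZeroDivisors_iff_right]
      intro c hc
      have hc' : algebraMap K Ki c * (algebraMap K Ki a ^ 2 + algebraMap K Ki b ^ 2) = 0 := by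
        rw [← map_pow, ← map_pow, ← map_add, ← map_mul, hc, map_zero]
      by_cases hy : (algebraMap K Ki a - algebraMap K Ki b * jK) * algebraMap K Ki c = 0
      · have h1 : algebraMap K Ki (a * c) + algebraMap K Ki (-(b * c)) * jK = 0 := by
          rw [map_mul, map_neg, map_mul]
          linear_combination hy
        obtain ⟨hac, hbc⟩ := hKi.eq_zero h1
        have h2 : algebraMap K Ki c * x = 0 := by
          rw [hab]
          have e1 := congrArg (algebraMap K Ki) hac
          have e2 := congrArg (algebraMap K Ki) hbc
          rw [map_mul, map_zero] at e1
          rw [map_neg, map_mul, map_zero, neg_eq_zero] at e2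
          linear_combination e1 + jK * e2
        have h3 := mem_nonZeroDivisors_iff_right.mp hx _ h2
        apply hKKiinj
        rw [h3, map_zero]
      · exfalso
        apply hy
        have key : ((algebraMap K Ki a - algebraMap K Ki b * jK) * algebraMap K Ki c) * x = 0 := by
          rw [hab]
          linear_combination hc' - algebraMap K Ki c * algebraMap K Ki b ^ 2 * hj2
        exact mem_nonZeroDivisors_iff_right.mp hx _ key
    obtain ⟨v, hv⟩ := (hKunit _ hsq).exists_right_inv
    apply IsUnit.of_mul_eq_one (a := x) ((algebraMap K Ki a - algebraMap K Ki b * jK) * algebraMap K Ki v)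
    have hv' := congrArg (algebraMap K Ki) hv
    rw [map_mul, map_add, map_pow, map_pow, map_one] at hv'
    rw [hab]
    linear_combination hv' - algebraMap K Ki b ^ 2 * algebraMap K Ki v * hj2
  -- common denominators
  have hcommon : ∀ z : Ki, ∃ w : Ri, ∃ s : R, s ∈ nonZeroDivisors R ∧
      z * algebraMap K Ki (algebraMap R K s) = ι w := by
    intro z
    obtain ⟨⟨a, b⟩, hab, -⟩ := hKi.2 z
    dsimp only at hab
    obtain ⟨⟨r₁, s₁⟩, h1⟩ := IsLocalization.surj (nonZeroDivisors R) a
    obtain ⟨⟨r₂, s₂⟩, h2⟩ := IsLocalization.surj (nonZeroDivisors R) b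
    dsimp only at h1 h2
    refine ⟨algebraMap R Ri (r₁ * (s₂ : R)) + algebraMap R Ri (r₂ * (s₁ : R)) * j,
      (s₁ : R) * (s₂ : R), mul_mem s₁.2 s₂.2, ?_⟩
    have e1 : a * algebraMap R K ((s₁ : R) * (s₂ : R)) = algebraMap R K (r₁ * (s₂ : R)) := by
      simp only [map_mul]
      linear_combination algebraMap R K (s₂ : R) * h1
    have e2 : b * algebraMap R K ((s₁ : R) * (s₂ : R)) = algebraMap R K (r₂ * (s₁ : R)) := by
      simp only [map_mul]
      linear_combination algebraMap R K (s₁ : R) * h2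
    have E1 := congrArg (algebraMap K Ki) e1
    have E2 := congrArg (algebraMap K Ki) e2
    simp only [map_mul] at E1 E2
    rw [hab]
    simp only [map_add, map_mul, hιR, hιj]
    linear_combination E1 + jK * E2
  -- ι maps nonzerodivisors of Ri to nonzerodivisors of Ki
  have hιnzd : ∀ x : Ri, x ∈ nonZeroDivisors Ri → ι x ∈ nonZeroDivisors Ki := by
    intro x hx
    rw [mem_nonZeroDivisors_iff_right]
    intro z hz
    obtain ⟨w, s, hs, hzw⟩ := hcommon z
    have hwx : w * x = 0 := by
      apply hιinj
      rw [map_mul, map_zero, ← hzw]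
      linear_combination algebraMap K Ki (algebraMap R K s) * hz
    have hw0 : w = 0 := mem_nonZeroDivisors_iff_right.mp hx w hwx
    have hsu : IsUnit (algebraMap K Ki (algebraMap R K s)) :=
      (IsLocalization.map_units K ⟨s, hs⟩).map (algebraMap K Ki)
    have : z * algebraMap K Ki (algebraMap R K s) = 0 := by rw [hzw, hw0, map_zero]
    exact hsu.mul_left_eq_zero.mp this
  -- `Ki` is the localization of `Ri` at its nonzerodivisors
  letI : Algebra Ri Ki := ι.toAlgebra
  have halg : (algebraMap Ri Ki : Ri →+* Ki) = ι := RingHom.algebraMap_toAlgebra ι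
  haveI hLoc : IsLocalization (nonZeroDivisors Ri) Ki := by
    refine ⟨?_, ?_, ?_⟩
    · intro y
      rw [halg]
      exact hKiunit _ (hιnzd _ y.2)
    · intro z
      obtain ⟨w, s, hs, hzw⟩ := hcommon z
      refine ⟨⟨w, ⟨algebraMap R Ri s, hRi.map_mem_nonZeroDivisors hs⟩⟩, ?_⟩
      dsimp only
      rw [halg, hιR]
      exact hzw
    · intro x y hxy
      rw [halg] at hxy
      exact ⟨1, by rw [hιinj hxy]⟩
  ext M
  simp only [Set.mem_setOf_eq]
  constructor
  · rintro ⟨ψ, hψφ, hψk, hψj, rfl⟩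
    have hmap : Submonoid.map ψ.toMonoidHom (nonZeroDivisors Ri) = nonZeroDivisors Ri := by
      ext x
      simp only [Submonoid.mem_map]
      constructor
      · rintro ⟨y, hy, rfl⟩
        exact ψ.map_mem_nonZeroDivisors' hy
      · intro hx
        exact ⟨ψ.symm x, ψ.symm.map_mem_nonZeroDivisors' hx, ψ.apply_symm_apply x⟩
    haveI hLoc2 : IsLocalization (Submonoid.map ψ.toMonoidHom (nonZeroDivisors Ri)) Ki := by
      rw [hmap]; exact hLoc
    let Ψ : Ki ≃+* Ki := IsLocalization.ringEquivOfRingEquiv Ki Ki ψ hmap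
    have hΨι : ∀ y : Ri, Ψ (ι y) = ι (ψ y) := by
      intro y
      have := IsLocalization.ringEquivOfRingEquiv_eq (S := Ki) (Q := Ki) hmap y
      rw [halg] at this
      exact this
    have hΨφ : ∀ y : Ki, Ψ (φKi y) = φKi (Ψ y) := by
      have hext : (Ψ.toRingHom.comp φKi.toRingHom).comp (algebraMap Ri Ki)
          = (φKi.toRingHom.comp Ψ.toRingHom).comp (algebraMap Ri Ki) := by
        ext y
        simp only [RingHom.coe_comp, Function.comp_apply, RingEquiv.coe_toRingHom, halg]
        show Ψ (φKi (ι y)) = φKi (Ψ (ι y))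
        rw [← hιφ, hΨι, hψφ, hιφ, ← hΨι]
      have := IsLocalization.ringHom_ext (nonZeroDivisors Ri) hext
      intro y
      exact RingHom.congr_fun this y
    refine ⟨Ψ, hΨφ, ?_, ?_, ?_⟩
    · intro c
      show Ψ (fR (algebraMap k R c)) = fR (algebraMap k R c)
      have h1 : fR (algebraMap k R c) = ι (algebraMap R Ri (algebraMap k R c)) := (hιR _).symm
      rw [h1, hΨι, hψk]
    · rw [← hιj, hΨι, hψj]
    · congr 1
      ext p q
      simp only [Matrix.map_apply]
      have h1 : fR (U p q) = ι (algebraMap R Ri (U p q)) := (hιR _).symm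
      rw [h1, hΨι]
  · rintro ⟨Ψ, hΨφ, hΨk, hΨj, rfl⟩
    -- constants of K lie in R
    have hconstK : ∀ a : K, φK a = a → ∃ r : R, algebraMap R K r = a := by
      intro a ha
      let I : Ideal R :=
        { carrier := {s : R | ∃ r : R, algebraMap R K s * a = algebraMap R K r}
          add_mem' := by
            rintro x y ⟨rx, hx⟩ ⟨ry, hy⟩
            exact ⟨rx + ry, by rw [map_add, map_add, add_mul, hx, hy]⟩
          zero_mem' := ⟨0, by simp⟩
          smul_mem' := by
            rintro c x ⟨r, hr⟩
            exact ⟨c * r, by rw [smul_eq_mul, map_mul, map_mul, mul_assoc, hr]⟩ }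
      have hdiff : IsDiffIdeal φR I := by
        rintro s ⟨r, hr⟩
        refine ⟨φR r, ?_⟩
        rw [← hcompatK, ← hcompatK, ← ha, ← map_mul, hr]
      obtain ⟨⟨r₀, s₀⟩, h₀⟩ := IsLocalization.surj (nonZeroDivisors R) a
      dsimp only at h₀
      have hs₀ : (s₀ : R) ∈ I := ⟨r₀, by rw [mul_comm]; exact h₀⟩
      rcases hsimple I hdiff with hbot | htop
      · exfalso
        rw [hbot] at hs₀
        exact nonZeroDivisors.ne_zero s₀.2 (Ideal.mem_bot.mp hs₀)
      · have h1 : (1 : R) ∈ I := by rw [htop]; trivial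
        obtain ⟨r, hr⟩ := h1
        exact ⟨r, by rw [← hr, map_one, one_mul]⟩
    -- constants of Ki lie in the image of Ri
    have hconstKi : ∀ z : Ki, φKi z = z → ∃ y : Ri, ι y = z := by
      intro z hz
      obtain ⟨⟨a, b⟩, hab, hu⟩ := hKi.2 z
      dsimp only at hab
      have hz' : z = algebraMap K Ki (φK a) + algebraMap K Ki (φK b) * jK := by
        rw [← hz, hab, map_add, map_mul, hcompatKi, hcompatKi, hφjK]
      have hpq : (φK a, φK b) = (a, b) := hu (φK a, φK b) hz'
      have ha : φK a = a := congrArg Prod.fst hpq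
      have hb : φK b = b := congrArg Prod.snd hpq
      obtain ⟨r₁, hr₁⟩ := hconstK a ha
      obtain ⟨r₂, hr₂⟩ := hconstK b hb
      refine ⟨algebraMap R Ri r₁ + algebraMap R Ri r₂ * j, ?_⟩
      rw [map_add, map_mul, hιR, hιR, hιj, hr₁, hr₂, ← hab]
    -- stability of ι.range under difference automorphisms of Ki fixing k and jK
    have hstab : ∀ Θ : Ki ≃+* Ki, (∀ y, Θ (φKi y) = φKi (Θ y)) →
        (∀ c : k, Θ (fk c) = fk c) → Θ jK = jK →
        ∀ y : Ri, ∃ x : Ri, ι x = Θ (ι y) := by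
      intro Θ hΘφ hΘk hΘj
      set g₁ : R →+* Ki := (algebraMap K Ki).comp (algebraMap R K) with hg₁def
      set g₂ : R →+* Ki := Θ.toRingHom.comp g₁ with hg₂def
      have hg₁ι : ∀ r : R, ι (algebraMap R Ri r) = g₁ r := fun r => hιR r
      have hg₂Θ : ∀ r : R, g₂ r = Θ (g₁ r) := fun r => rfl
      have hφg₁ : ∀ r, φKi (g₁ r) = g₁ (φR r) := by
        intro r
        show φKi (algebraMap K Ki (algebraMap R K r)) = algebraMap K Ki (algebraMap R K (φR r))
        rw [hcompatKi, hcompatK]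
      have hφg₂ : ∀ r, φKi (g₂ r) = g₂ (φR r) := by
        intro r
        show φKi (Θ (g₁ r)) = Θ (g₁ (φR r))
        rw [← hΘφ, hφg₁]
      have hVφ : (U.map ⇑g₁).map ⇑φKi.toRingHom
          = A.map (⇑g₁ ∘ ⇑(algebraMap k R)) * U.map ⇑g₁ := by
        rw [Matrix.map_map]
        have h1 : ⇑φKi.toRingHom ∘ ⇑g₁ = ⇑g₁ ∘ ⇑φR := funext hφg₁
        rw [h1, ← Matrix.map_map, hU.2, Matrix.map_mul, Matrix.map_map]
      have hWφ : (U.map ⇑g₂).map ⇑φKi.toRingHom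
          = A.map (⇑g₁ ∘ ⇑(algebraMap k R)) * U.map ⇑g₂ := by
        rw [Matrix.map_map]
        have h1 : ⇑φKi.toRingHom ∘ ⇑g₂ = ⇑g₂ ∘ ⇑φR := funext hφg₂
        rw [h1, ← Matrix.map_map, hU.2, Matrix.map_mul, Matrix.map_map]
        congr 1
        have hfun : ⇑g₂ ∘ ⇑(algebraMap k R) = ⇑g₁ ∘ ⇑(algebraMap k R) := by
          funext c
          show Θ (g₁ (algebraMap k R c)) = g₁ (algebraMap k R c)
          exact hΘk c
        rw [hfun]
      have hdetV : (U.map ⇑g₁).det = g₁ U.det := by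
        rw [RingHom.map_det, RingHom.mapMatrix_apply]
      have hdetW : (U.map ⇑g₂).det = g₂ U.det := by
        rw [RingHom.map_det, RingHom.mapMatrix_apply]
      have hdVu : IsUnit (U.map ⇑g₁).det := by rw [hdetV]; exact hU.1.map g₁
      have hdAu : IsUnit (A.map (⇑g₁ ∘ ⇑(algebraMap k R))).det := by
        have h1 : (g₁.comp (algebraMap k R)) A.det = (A.map (⇑g₁ ∘ ⇑(algebraMap k R))).det := by
          rw [RingHom.map_det, RingHom.mapMatrix_apply]
          rfl
        rw [← h1]
        exact hA.map _
      set M' : Matrix (Fin n) (Fin n) Ki := (U.map ⇑g₁)⁻¹ * (U.map ⇑g₂) with hM'def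
      have hM'φ : M'.map ⇑φKi.toRingHom = M' :=
        const_matrix_aux φKi.toRingHom _ _ _ hVφ hWφ hdVu hdAu
      have hVM' : (U.map ⇑g₁) * M' = U.map ⇑g₂ := by
        rw [hM'def, ← Matrix.mul_assoc, Matrix.mul_nonsing_inv _ hdVu, Matrix.one_mul]
      have hM'entry : ∀ p q, ∃ x : Ri, ι x = M' p q := by
        intro p q
        have h1 : φKi (M' p q) = M' p q := congrArg (fun N => N p q) hM'φ
        exact hconstKi _ h1
      have hdetVW : (U.map ⇑g₁).det * M'.det = (U.map ⇑g₂).det := by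
        rw [← Matrix.det_mul, hVM']
      have hdetM'unit : IsUnit M'.det := by
        have h1 : IsUnit ((U.map ⇑g₁).det * M'.det) := by
          rw [hdetVW, hdetW]
          exact hU.1.map g₂
        exact isUnit_of_mul_isUnit_right h1
      have hdetM'const : φKi M'.det = M'.det := by
        have h1 : φKi.toRingHom M'.det = (φKi.toRingHom.mapMatrix M').det :=
          RingHom.map_det _ _
        rw [RingHom.mapMatrix_apply] at h1
        calc φKi M'.det = (M'.map ⇑φKi.toRingHom).det := h1
          _ = M'.det := by rw [hM'φ]
      obtain ⟨cu, hcu⟩ := hdetM'unit.exists_right_inv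
      have hcuconst : φKi cu = cu := by
        have h1 : M'.det * φKi cu = 1 := by
          rw [← hdetM'const, ← map_mul, hcu, map_one]
        exact hdetM'unit.mul_left_cancel (h1.trans hcu.symm)
      obtain ⟨xcu, hxcu⟩ := hconstKi cu hcuconst
      -- every element of R is sent into the image of Ri
      have hRmem : ∀ a : R, Θ (g₁ a) ∈ ι.range := by
        have hgen : ∀ a : R, a ∈ Algebra.adjoin k
            ((Set.range fun p : Fin n × Fin n => U p.1 p.2) ∪ {Ring.inverse U.det}) := by
          intro a; rw [hUgen]; trivial
        intro a
        have ha := hgen a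
        induction ha using Algebra.adjoin_induction with
        | mem x hx =>
          rcases hx with ⟨p, rfl⟩ | hx
          · -- an entry of U
            have h1 : Θ (g₁ (U p.1 p.2)) = ((U.map ⇑g₁) * M') p.1 p.2 := by
              rw [hVM']; rfl
            rw [h1, Matrix.mul_apply]
            apply sum_mem
            intro l _
            exact mul_mem ⟨algebraMap R Ri (U p.1 l), hg₁ι _⟩
              (RingHom.mem_range.mpr (hM'entry l p.2))
          · -- the inverse of det U
            rw [Set.mem_singleton_iff] at hx
            subst hx
            have hd1 : U.det * Ring.inverse U.det = 1 := Ring.mul_inverse_cancel _ hU.1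
            have hΘd : Θ (g₁ U.det) = g₁ U.det * M'.det := by
              calc Θ (g₁ U.det) = (U.map ⇑g₂).det := by rw [hdetW]; rfl
                _ = (U.map ⇑g₁).det * M'.det := hdetVW.symm
                _ = g₁ U.det * M'.det := by rw [hdetV]
            have h1 : Θ (g₁ (Ring.inverse U.det)) * Θ (g₁ U.det) = 1 := by
              rw [← map_mul, ← map_mul, mul_comm (Ring.inverse U.det) U.det, hd1,
                map_one, map_one]
            have h2 : (g₁ (Ring.inverse U.det) * cu) * Θ (g₁ U.det) = 1 := by
              rw [hΘd]
              have hX : g₁ U.det * g₁ (Ring.inverse U.det) = 1 := by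
                rw [← map_mul, hd1, map_one]
              linear_combination (M'.det * cu) * hX + hcu
            have h3 : Θ (g₁ (Ring.inverse U.det)) = g₁ (Ring.inverse U.det) * cu := by
              calc Θ (g₁ (Ring.inverse U.det))
                  = Θ (g₁ (Ring.inverse U.det)) * ((g₁ (Ring.inverse U.det) * cu) * Θ (g₁ U.det)) := by
                    rw [h2, mul_one]
                _ = (g₁ (Ring.inverse U.det) * cu) * (Θ (g₁ (Ring.inverse U.det)) * Θ (g₁ U.det)) := by
                    ring
                _ = g₁ (Ring.inverse U.det) * cu := by rw [h1, mul_one]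
            rw [h3]
            exact mul_mem ⟨algebraMap R Ri (Ring.inverse U.det), hg₁ι _⟩
              (RingHom.mem_range.mpr ⟨xcu, hxcu⟩)
        | algebraMap c =>
          have h1 : Θ (g₁ (algebraMap k R c)) = g₁ (algebraMap k R c) := hΘk c
          rw [h1]
          exact ⟨algebraMap R Ri (algebraMap k R c), hg₁ι _⟩
        | add x y hx hy ihx ihy =>
          simp only [map_add]
          exact add_mem ihx ihy
        | mul x y hx hy ihx ihy =>
          simp only [map_mul]
          exact mul_mem ihx ihy
      -- conclude for all of Ri
      intro y
      obtain ⟨⟨a, b⟩, hab, -⟩ := hRi.2 y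
      dsimp only at hab
      have h1 : ι y = g₁ a + g₁ b * jK := by
        rw [hab, map_add, map_mul, hg₁ι, hg₁ι, hιj]
      have hmem : Θ (ι y) ∈ ι.range := by
        rw [h1, map_add, map_mul, hΘj]
        exact add_mem (hRmem a) (mul_mem (hRmem b) ⟨j, hιj⟩)
      exact RingHom.mem_range.mp hmem
    -- symm of Ψ has the same properties
    have hΨφ' : ∀ y, Ψ.symm (φKi y) = φKi (Ψ.symm y) := by
      intro y
      apply Ψ.injective
      rw [Ψ.apply_symm_apply, hΨφ, Ψ.apply_symm_apply]
    have hΨk' : ∀ c : k, Ψ.symm (fk c) = fk c := by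
      intro c
      apply Ψ.injective
      rw [Ψ.apply_symm_apply, hΨk]
    have hΨj' : Ψ.symm jK = jK := by
      apply Ψ.injective
      rw [Ψ.apply_symm_apply, hΨj]
    choose χ hχ using hstab Ψ hΨφ hΨk hΨj
    choose χ' hχ' using hstab Ψ.symm hΨφ' hΨk' hΨj'
    let ψ : Ri ≃+* Ri :=
      { toFun := χ
        invFun := χ'
        left_inv := by
          intro x
          apply hιinj
          rw [hχ', hχ, Ψ.symm_apply_apply]
        right_inv := by
          intro x
          apply hιinj
          rw [hχ, hχ', Ψ.apply_symm_apply]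
        map_mul' := by
          intro x y
          apply hιinj
          calc ι (χ (x * y)) = Ψ (ι (x * y)) := hχ _
            _ = Ψ (ι x) * Ψ (ι y) := by rw [map_mul, map_mul]
            _ = ι (χ x) * ι (χ y) := by rw [hχ, hχ]
            _ = ι (χ x * χ y) := (map_mul ι _ _).symm
        map_add' := by
          intro x y
          apply hιinj
          calc ι (χ (x + y)) = Ψ (ι (x + y)) := hχ _
            _ = Ψ (ι x) + Ψ (ι y) := by rw [map_add, map_add]
            _ = ι (χ x) + ι (χ y) := by rw [hχ, hχ]
            _ = ι (χ x + χ y) := (map_add ι _ _).symm }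
    have hψeq : ∀ x : Ri, ψ x = χ x := fun x => rfl
    refine ⟨ψ, ?_, ?_, ?_, ?_⟩
    · intro y
      apply hιinj
      calc ι (ψ (φi y)) = Ψ (ι (φi y)) := hχ _
        _ = Ψ (φKi (ι y)) := by rw [hιφ]
        _ = φKi (Ψ (ι y)) := hΨφ _
        _ = φKi (ι (ψ y)) := by rw [← hχ y]; rfl
        _ = ι (φi (ψ y)) := (hιφ _).symm
    · intro c
      apply hιinj
      calc ι (ψ (algebraMap R Ri (algebraMap k R c))) = Ψ (ι (algebraMap R Ri (algebraMap k R c))) := hχ _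
        _ = Ψ (fk c) := by rw [hιR]
        _ = fk c := hΨk c
        _ = ι (algebraMap R Ri (algebraMap k R c)) := (hιR _).symm
    · apply hιinj
      calc ι (ψ j) = Ψ (ι j) := hχ _
        _ = Ψ jK := by rw [hιj]
        _ = jK := hΨj
        _ = ι j := hιj.symm
    · congr 1
      ext p q
      simp only [Matrix.map_apply]
      calc Ψ (fR (U p q)) = Ψ (ι (algebraMap R Ri (U p q))) := by rw [hιR]
        _ = ι (ψ (algebraMap R Ri (U p q))) := (hχ _).symm
end

section
/- Let (R, φ) be a real Picard–Vessiot extension for the system φY = AY over (k, φ) with fundamental matrix U ∈ GL_n(R) and total ring of fractions K, let G be the real difference Galois group, and let 𝓖 be the set of linear algebraic subgroups of G (subgroups H ⊆ G whose image ρ_U(H) is Zariski closed in GL_n(C[i])). Then for every H ∈ 𝓖, the fixed ring K^H := {x ∈ K : ψ(x) = x for all ψ ∈ H} is a φ-stable subring of K containing k in which every non-zero-divisor is a unit. -/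
universe u v w x

open scoped TensorProduct

section AuxLemmas


lemma exists_mul_eq_zero_of_mem_minimalPrimes {K : Type*} [CommRing K] [IsReduced K]
    {p : Ideal K} (hmin : p ∈ minimalPrimes K) {x : K} (hx : x ∈ p) :
    ∃ s, s ∉ p ∧ s * x = 0 := by
  haveI hp : p.IsPrime := hmin.1.1
  have hnil : IsNilpotent (algebraMap K (Localization p.primeCompl) x) := by
    haveI := Ring.KrullDimLE.of_isLocalization p hmin (Localization.AtPrime p)
    exact Ring.KrullDimLE.isNilpotent_iff_mem_maximalIdeal.mpr
      ((IsLocalization.AtPrime.to_map_mem_maximal_iff _ p x).mpr hx)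
  obtain ⟨m, hm⟩ := hnil
  rw [← map_pow] at hm
  obtain ⟨s, hs⟩ := (IsLocalization.map_eq_zero_iff p.primeCompl _ _).mp hm
  have hsnot : (s : K) ∉ p := s.2
  rcases Nat.eq_zero_or_pos m with rfl | hmpos
  · rw [pow_zero, mul_one] at hs
    exact absurd (hs ▸ p.zero_mem) hsnot
  · obtain ⟨t, rfl⟩ : ∃ t, m = t + 1 := ⟨m - 1, by omega⟩
    refine ⟨s, hsnot, ?_⟩
    have hnp : ((s : K) * x) ^ (t + 1) = 0 := by
      rw [mul_pow, pow_succ (s : K), mul_assoc]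
      rw [hs, mul_zero]
    exact IsNilpotent.eq_zero ⟨t + 1, hnp⟩

lemma maximal_mem_minimalPrimes {K : Type*} [CommRing K] [IsReduced K] [IsNoetherianRing K]
    (hu : ∀ y : K, y ∈ nonZeroDivisors K → IsUnit y)
    (M : Ideal K) (hM : M.IsMaximal) : M ∈ minimalPrimes K := by
  classical
  have hfin := minimalPrimes.finite_of_isNoetherianRing K
  have hsub : (M : Set K) ⊆ ⋃ p ∈ (hfin.toFinset : Set (Ideal K)), (↑(id p) : Set K) := by
    intro z hz
    have hznu : ¬ IsUnit z := fun h => hM.ne_top (M.eq_top_of_isUnit_mem hz h)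
    have hznzd : z ∉ nonZeroDivisors K := fun h => hznu (hu z h)
    rw [mem_nonZeroDivisors_iff_right] at hznzd
    push_neg at hznzd
    obtain ⟨w, hw1, hw2⟩ := hznzd
    have hwnil : w ∉ sInf (minimalPrimes K) := by
      rw [show minimalPrimes K = (⊥ : Ideal K).minimalPrimes from rfl,
        Ideal.sInf_minimalPrimes]
      intro hcon
      have : w ∈ nilradical K := hcon
      rw [nilradical_eq_zero] at this
      exact hw2 (by simpa using this)
    rw [Submodule.mem_sInf] at hwnil
    push_neg at hwnil
    obtain ⟨q, hq, hwq⟩ := hwnil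
    haveI := hq.1.1
    have hzq : z ∈ q := by
      rcases hq.1.1.mem_or_mem (show z * w ∈ q by rw [mul_comm, hw1]; exact q.zero_mem) with h | h
      · exact h
      · exact absurd h hwq
    exact Set.mem_biUnion (by simpa using hq) hzq
  obtain ⟨q, hq, hle⟩ := (Ideal.subset_union_prime (f := id) M M
    (fun p hp _ _ => ((hfin.mem_toFinset).mp hp).1.1)).mp hsub
  have hqmin : q ∈ minimalPrimes K := (hfin.mem_toFinset).mp hq
  have : M = q := hM.eq_of_le hqmin.1.1.ne_top hle
  rwa [this]

lemma vnr_of_total {K : Type*} [CommRing K] [IsReduced K] [IsNoetherianRing K]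
    (hu : ∀ y : K, y ∈ nonZeroDivisors K → IsUnit y) (y : K) :
    ∃ x : K, y * x * y = y := by
  set Ann : Ideal K := LinearMap.ker (LinearMap.mul K K y) with hAnn
  have hJ : Ideal.span {y * y} ⊔ Ann = ⊤ := by
    by_contra hne
    obtain ⟨M, hMmax, hle⟩ := Ideal.exists_le_maximal _ hne
    have hMmin := maximal_mem_minimalPrimes hu M hMmax
    have hy2 : y * y ∈ M := hle (Ideal.mem_sup_left (Ideal.subset_span rfl))
    have hyM : y ∈ M := by
      rcases hMmax.isPrime.mem_or_mem hy2 with h | h <;> exact h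
    obtain ⟨s, hs, hsy⟩ := exists_mul_eq_zero_of_mem_minimalPrimes hMmin hyM
    refine hs (hle (Ideal.mem_sup_right ?_))
    show y * s = 0
    rw [mul_comm]; exact hsy
  have h1 : (1 : K) ∈ Ideal.span {y * y} ⊔ Ann := hJ ▸ Submodule.mem_top
  rw [Submodule.mem_sup] at h1
  obtain ⟨u, hu', v, hv, huv⟩ := h1
  obtain ⟨a, ha⟩ := Ideal.mem_span_singleton'.mp hu'
  have hyv : y * v = 0 := hv
  refine ⟨a * y, ?_⟩
  have : y * (a * y) * y = (a * (y * y)) * y := by ring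
  rw [this, ha]
  have : u * y = (u + v) * y - y * v := by ring
  rw [this, huv, hyv, one_mul, sub_zero]

lemma loc_reduced {R K : Type*} [CommRing R] [IsReduced R] [CommRing K] [Algebra R K]
    [IsLocalization (nonZeroDivisors R) K] : IsReduced K := by
  refine ⟨fun x hx => ?_⟩
  obtain ⟨m, hm⟩ := hx
  rcases Nat.eq_zero_or_pos m with rfl | hmpos
  · rw [pow_zero] at hm
    haveI := subsingleton_of_zero_eq_one hm.symm
    exact Subsingleton.elim _ _
  obtain ⟨⟨r, s⟩, rfl⟩ := IsLocalization.mk'_surjective (nonZeroDivisors R) x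
  have hspec := IsLocalization.mk'_spec K r s
  have hpow : algebraMap R K (r ^ m) = 0 := by
    have : (IsLocalization.mk' K r s * algebraMap R K (s : R)) ^ m = (algebraMap R K r) ^ m := by
      rw [hspec]
    rw [mul_pow, hm, zero_mul] at this
    rw [map_pow, ← this]
  obtain ⟨t, ht⟩ := (IsLocalization.map_eq_zero_iff (nonZeroDivisors R) _ _).mp hpow
  have hrm : r ^ m = 0 := mem_nonZeroDivisors_iff_right.mp t.2 _ (by rw [mul_comm]; exact ht)
  have hr : r = 0 := IsNilpotent.eq_zero ⟨m, hrm⟩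
  subst hr
  exact IsLocalization.mk'_zero s


lemma loc_unit {R K : Type*} [CommRing R] [CommRing K] [Algebra R K]
    [IsLocalization (nonZeroDivisors R) K] {y : K} (hy : y ∈ nonZeroDivisors K) :
    IsUnit y := by
  obtain ⟨⟨r, s⟩, rfl⟩ := IsLocalization.mk'_surjective (nonZeroDivisors R) y
  rw [mem_nonZeroDivisors_iff_right] at hy
  have hspec := IsLocalization.mk'_spec K r s
  have hr : r ∈ nonZeroDivisors R := by
    rw [mem_nonZeroDivisors_iff_right]
    intro z hz
    have h1 : (algebraMap R K z * IsLocalization.mk' K r s) * algebraMap R K (s : R) = 0 := by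
      rw [mul_assoc, hspec, ← map_mul, hz, map_zero]
    have h2 : algebraMap R K z * IsLocalization.mk' K r s = 0 := by
      obtain ⟨d, hd⟩ := (IsLocalization.map_units K s).exists_right_inv
      calc algebraMap R K z * IsLocalization.mk' K r s
          = (algebraMap R K z * IsLocalization.mk' K r s) * (algebraMap R K (s : R) * d) := by
            rw [hd, mul_one]
        _ = ((algebraMap R K z * IsLocalization.mk' K r s) * algebraMap R K (s : R)) * d := by
            ring
        _ = 0 := by rw [h1, zero_mul]
    have h3 : algebraMap R K z = 0 := hy _ h2
    have hinj := IsLocalization.injective K (le_refl (nonZeroDivisors R))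
    exact hinj (by rw [h3, map_zero])
  have h4 : IsUnit (algebraMap R K r) := IsLocalization.map_units K ⟨r, hr⟩
  rw [← hspec] at h4
  exact isUnit_of_mul_isUnit_left h4

end AuxLemmas

/-- For every `H ∈ 𝓖` (a linear algebraic subgroup of the real difference Galois
group `G`), the fixed ring `K^H` is a `φ`-stable subring of `K` containing `k` in which
every non-zero-divisor is a unit. -/
theorem statement11
    {k : Type u} [Field k] [CharZero k] (φk : k ≃+* k)
    (hk_real : IsRealRing k)
    (hC_rc : IsRealClosedField (↥(fixedSubfield φk)))
    {n : ℕ} (A : Matrix (Fin n) (Fin n) k) (hA : IsUnit A.det)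
    (R : Type v) [CommRing R] [Algebra k R] (φR : R ≃+* R)
    (hPV : IsPicardVessiot k R φk φR A) (hRreal : IsRealRing R)
    (U : Matrix (Fin n) (Fin n) R) (hU : IsFundamentalMatrix φR A U)
    (hUgen : GeneratedByFund k U)
    -- `K`, the total ring of fractions of `R`
    (K : Type w) [CommRing K] [Algebra R K] [IsLocalization (nonZeroDivisors R) K]
    (φK : K ≃+* K) (hcompatK : DiffCompat K φR φK)
    -- `K[i]`
    (Ki : Type w) [CommRing Ki] [Algebra K Ki]
    (jK : Ki) (hKi : IsAdjoinI K Ki jK)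
    (φKi : Ki ≃+* Ki) (hcompatKi : DiffCompat Ki φK φKi) (hφjK : φKi jK = jK) :
    -- the embeddings of `R`, `k` and `C` into `K[i]`
    let fR : R → Ki := fun r => algebraMap K Ki (algebraMap R K r)
    let fk : k → Ki := fun c => fR (algebraMap k R c)
    let fC : (↥(fixedSubfield φk)) →+* Ki :=
      ((algebraMap K Ki).comp ((algebraMap R K).comp (algebraMap k R))).comp
        (fixedSubfield φk).subtype
    -- `R[i]` and `C[i]` inside `K[i]`
    let RiSet : Set Ki := {y | ∃ a b : R, y = fR a + fR b * jK}
    let Ci : Set Ki := {y | ∃ a b : k, φk a = a ∧ φk b = b ∧ y = fk a + fk b * jK}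
    -- the real difference Galois group `G`: difference automorphisms of `K[i]` fixing
    -- `k[i]` pointwise and stabilizing `R[i]` (i.e. the canonical extensions to `K[i]`
    -- of the difference automorphisms of `R[i]` fixing `k[i]` pointwise)
    let GCond : (Ki ≃+* Ki) → Prop := fun Ψ =>
      (∀ y : Ki, Ψ (φKi y) = φKi (Ψ y)) ∧ (∀ c : k, Ψ (fk c) = fk c) ∧ Ψ jK = jK ∧
      (∀ y ∈ RiSet, Ψ y ∈ RiSet) ∧ (∀ y ∈ RiSet, Ψ.symm y ∈ RiSet)
    -- `ρ_U`
    let ρ : (Ki ≃+* Ki) → Matrix (Fin n) (Fin n) Ki := fun Ψ =>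
      (U.map fR)⁻¹ * U.map fun r => Ψ (fR r)
    -- evaluation of a polynomial with coefficients in `C[i] = C + C·i` at a matrix
    let ev : (MvPolynomial (Fin n × Fin n) (↥(fixedSubfield φk)) ×
        MvPolynomial (Fin n × Fin n) (↥(fixedSubfield φk))) →
        Matrix (Fin n) (Fin n) Ki → Ki := fun P M =>
      MvPolynomial.eval₂ fC (fun p => M p.1 p.2) P.1 +
        jK * MvPolynomial.eval₂ fC (fun p => M p.1 p.2) P.2
    -- membership in `𝓕`
    let FCond : Subring K → Prop := fun F =>
      (∀ c : k, algebraMap R K (algebraMap k R c) ∈ F) ∧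
      (∀ y : K, y ∈ F ↔ φK y ∈ F) ∧
      (∀ y ∈ F, (∀ z ∈ F, y * z = 0 → z = 0) → ∃ z ∈ F, y * z = 1)
    -- `G(K/F)`
    let GKF : Subring K → Set (Ki ≃+* Ki) := fun F =>
      {Ψ | GCond Ψ ∧ ∀ y : K, y ∈ F → Ψ (algebraMap K Ki y) = algebraMap K Ki y}
    -- membership in `𝓖`: subgroups of `G` whose image under `ρ_U` is Zariski closed
    -- in `GL_n(C[i])`
    let HCond : Set (Ki ≃+* Ki) → Prop := fun H =>
      (∀ Ψ ∈ H, GCond Ψ) ∧ RingEquiv.refl Ki ∈ H ∧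
      (∀ Ψ₁ ∈ H, ∀ Ψ₂ ∈ H, Ψ₁.trans Ψ₂ ∈ H) ∧ (∀ Ψ ∈ H, Ψ.symm ∈ H) ∧
      ∃ S : Set (MvPolynomial (Fin n × Fin n) (↥(fixedSubfield φk)) ×
          MvPolynomial (Fin n × Fin n) (↥(fixedSubfield φk))),
        ρ '' H = {M | (∀ p q : Fin n, M p q ∈ Ci) ∧ IsUnit M.det ∧ ∀ P ∈ S, ev P M = 0}
    -- the fixed ring `K^H`
    let KH : Set (Ki ≃+* Ki) → Set K := fun H =>
      {y : K | ∀ Ψ ∈ H, Ψ (algebraMap K Ki y) = algebraMap K Ki y}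
    ∀ H : Set (Ki ≃+* Ki), HCond H →
      ∃ F : Subring K, (F : Set K) = KH H ∧
        (∀ c : k, algebraMap R K (algebraMap k R c) ∈ F) ∧
        (∀ y : K, y ∈ F ↔ φK y ∈ F) ∧
        (∀ y ∈ F, (∀ z ∈ F, y * z = 0 → z = 0) → ∃ z ∈ F, y * z = 1) := by
  intro fR fk fC RiSet Ci GCond ρ ev FCond GKF HCond KH H hH
  obtain ⟨hG, -, -, hsymm, -⟩ := hH
  obtain ⟨hnontriv, hcompatR, -, hsimple⟩ := hPV
  haveI : Nontrivial R := hnontriv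
  haveI : IsReduced R := by
    have hdiff : IsDiffIdeal φR (nilradical R) := fun z hz =>
      mem_nilradical.mpr ((mem_nilradical.mp hz).map (φR : R →+* R))
    rcases hsimple _ hdiff with hbot | htop
    · refine ⟨fun x hx => ?_⟩
      have hmem : x ∈ nilradical R := mem_nilradical.mpr hx
      rw [hbot] at hmem
      simpa using hmem
    · exfalso
      have h1 : (1 : R) ∈ nilradical R := by rw [htop]; trivial
      obtain ⟨m, hm⟩ := mem_nilradical.mp h1
      rw [one_pow] at hm
      exact one_ne_zero hm
  haveI : Algebra.FiniteType k R := by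
    have hfin : ((Set.range fun p : Fin n × Fin n => U p.1 p.2) ∪
        {Ring.inverse U.det}).Finite := (Set.finite_range _).union (Set.finite_singleton _)
    exact ⟨⟨hfin.toFinset, by rwa [Set.Finite.coe_toFinset]⟩⟩
  haveI : IsNoetherianRing R := Algebra.FiniteType.isNoetherianRing k R
  haveI : IsNoetherianRing K :=
    IsLocalization.isNoetherianRing (nonZeroDivisors R) K inferInstance
  haveI : IsReduced K := loc_reduced (R := R)
  have hu : ∀ y : K, y ∈ nonZeroDivisors K → IsUnit y := fun y hy => loc_unit (R := R) hy
  refine ⟨{ carrier := KH H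
            mul_mem' := fun {a b} ha hb Ψ hΨ => by
              simp only [map_mul]
              rw [ha Ψ hΨ, hb Ψ hΨ]
            one_mem' := fun Ψ hΨ => by simp only [map_one]
            add_mem' := fun {a b} ha hb Ψ hΨ => by
              simp only [map_add]
              rw [ha Ψ hΨ, hb Ψ hΨ]
            zero_mem' := fun Ψ hΨ => by simp only [map_zero]
            neg_mem' := fun {a} ha Ψ hΨ => by
              simp only [map_neg]
              rw [ha Ψ hΨ] }, rfl, ?_, ?_, ?_⟩
  · -- contains k
    intro c Ψ hΨ
    exact (hG Ψ hΨ).2.1 c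
  · -- φ-stability
    intro y
    constructor
    · intro hy Ψ hΨ
      have hy' : ∀ Ψ ∈ H, Ψ (algebraMap K Ki y) = algebraMap K Ki y := hy
      show Ψ (algebraMap K Ki (φK y)) = algebraMap K Ki (φK y)
      rw [← hcompatKi y, (hG Ψ hΨ).1 (algebraMap K Ki y), hy' Ψ hΨ]
    · intro hy Ψ hΨ
      have h2 : Ψ (algebraMap K Ki (φK y)) = algebraMap K Ki (φK y) := hy Ψ hΨ
      rw [← hcompatKi y, (hG Ψ hΨ).1 (algebraMap K Ki y)] at h2
      exact φKi.injective h2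
  · -- non-zero-divisors are units
    intro y hy hreg
    have hy' : ∀ Ψ ∈ H, Ψ (algebraMap K Ki y) = algebraMap K Ki y := hy
    obtain ⟨x, hx⟩ := vnr_of_total hu y
    set f := 1 - x * y with hf
    have hfy : f * y = 0 := by rw [hf]; linear_combination -hx
    have hAf : algebraMap K Ki f = 1 - algebraMap K Ki x * algebraMap K Ki y := by
      rw [hf, map_sub, map_one, map_mul]
    have hfy' : algebraMap K Ki f * algebraMap K Ki y = 0 := by
      rw [← map_mul, hfy, map_zero]
    have hP : ∀ z : Ki, z * algebraMap K Ki y = 0 → z * algebraMap K Ki f = z := by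
      intro z hz
      rw [hAf]
      linear_combination (- algebraMap K Ki x) * hz
    have hfF : ∀ Ψ ∈ H, Ψ (algebraMap K Ki f) = algebraMap K Ki f := by
      intro Ψ hΨ
      have h1 : Ψ (algebraMap K Ki f) * algebraMap K Ki y = 0 := by
        rw [← hy' Ψ hΨ, ← map_mul, hfy', map_zero]
      have h2 := hP _ h1
      have h3 : Ψ.symm (algebraMap K Ki f) * algebraMap K Ki y = 0 := by
        apply Ψ.injective
        rw [map_mul, RingEquiv.apply_symm_apply, hy' Ψ hΨ, hfy', map_zero]
      have h4 := hP _ h3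
      have h5 : algebraMap K Ki f * Ψ (algebraMap K Ki f) = algebraMap K Ki f := by
        have h6 := congrArg Ψ h4
        rwa [map_mul, RingEquiv.apply_symm_apply] at h6
      rw [← h2, mul_comm, h5]
    have hf0 : f = 0 := hreg f hfF (by rw [mul_comm]; exact hfy)
    have hxy : x * y = 1 := by
      rw [hf] at hf0
      linear_combination -hf0
    have hxF : ∀ Ψ ∈ H, Ψ (algebraMap K Ki x) = algebraMap K Ki x := by
      intro Ψ hΨ
      have hA1 : algebraMap K Ki x * algebraMap K Ki y = 1 := by
        rw [← map_mul, hxy, map_one]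
      have h6 : Ψ (algebraMap K Ki x) * algebraMap K Ki y = 1 := by
        rw [← hy' Ψ hΨ, ← map_mul, hA1, map_one]
      calc Ψ (algebraMap K Ki x)
          = Ψ (algebraMap K Ki x) * (algebraMap K Ki x * algebraMap K Ki y) := by
            rw [hA1, mul_one]
        _ = algebraMap K Ki x * (Ψ (algebraMap K Ki x) * algebraMap K Ki y) := by ring
        _ = algebraMap K Ki x := by rw [h6, mul_one]
    exact ⟨x, hxF, by rw [mul_comm]; exact hxy⟩
end

section
/- Let φ be the ℝ-algebra automorphism of the Laurent polynomial ring ℝ[T, T⁻¹] determined by φ(T) = √2·T. Then (ℝ[T, T⁻¹], φ) is a simple difference ring: its only ideals stable under φ are (0) and the whole ring. -/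
universe u v w x

open scoped TensorProduct

/-- The Laurent polynomial ring `ℝ[T, T⁻¹]`, with the `ℝ`-algebra automorphism `φ`
determined by `φ(T) = √2·T`, is a simple difference ring. -/
theorem statement14
    (φ : LaurentPolynomial ℝ ≃+* LaurentPolynomial ℝ)
    (hφC : ∀ r : ℝ, φ (LaurentPolynomial.C r) = LaurentPolynomial.C r)
    (hφT : φ (LaurentPolynomial.T 1) =
      LaurentPolynomial.C (Real.sqrt 2) * LaurentPolynomial.T 1) :
    IsSimpleDiffRing φ := by
  classical
  open LaurentPolynomial in
  set s := Real.sqrt 2 with hsdef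
  have hs0 : (0:ℝ) < s := Real.sqrt_pos.mpr (by norm_num)
  have hsne : s ≠ 0 := ne_of_gt hs0
  have hs1 : s ≠ 1 := by
    rw [hsdef]
    intro h
    rw [Real.sqrt_eq_one] at h
    norm_num at h
  -- φ on T n
  have hTneg : φ (T (-1)) = C (s ^ (-1:ℤ)) * T (-1) := by
    have h1 : φ (T 1) * φ (T (-1)) = 1 := by
      rw [← map_mul, ← T_add, add_neg_cancel, T_zero, map_one]
    have h2 : φ (T 1) * (C (s ^ (-1:ℤ)) * T (-1)) = 1 := by
      rw [hφT, mul_mul_mul_comm, ← map_mul, ← T_add, add_neg_cancel, T_zero,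
        zpow_neg_one, mul_inv_cancel₀ hsne, map_one, mul_one]
    calc φ (T (-1)) = φ (T (-1)) * (φ (T 1) * (C (s ^ (-1:ℤ)) * T (-1))) := by
          rw [h2, mul_one]
      _ = (φ (T 1) * φ (T (-1))) * (C (s ^ (-1:ℤ)) * T (-1)) := by ring
      _ = C (s ^ (-1:ℤ)) * T (-1) := by rw [h1, one_mul]
  have hTn : ∀ n : ℤ, φ (T n) = C (s ^ n) * T n := by
    intro n
    induction n using Int.induction_on with
    | zero => simp [T_zero]
    | succ k ih =>
        rw [T_add, map_mul, ih, hφT, mul_mul_mul_comm, ← map_mul, ← T_add,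
          zpow_add_one₀ hsne]
    | pred k ih =>
        rw [show (-(k:ℤ) - 1) = (-(k:ℤ)) + (-1) by ring, T_add, map_mul, ih, hTneg,
          mul_mul_mul_comm, ← map_mul, ← T_add, ← zpow_add₀ hsne]
  -- coefficientwise description of φ
  have hcoeff : ∀ (f : LaurentPolynomial ℝ) (m : ℤ), (φ f).coeff m = f.coeff m * s ^ m := by
    have hsingle : ∀ (n : ℤ) (a : ℝ),
        φ (AddMonoidAlgebra.single n a : LaurentPolynomial ℝ) = AddMonoidAlgebra.single n (a * s ^ n) := by
      intro n a
      rw [single_eq_C_mul_T, map_mul, hφC, hTn, single_eq_C_mul_T, ← mul_assoc, ← map_mul]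
    intro f m
    conv_lhs => rw [← AddMonoidAlgebra.ofCoeff_coeff f, ← Finsupp.sum_single f.coeff]
    rw [AddMonoidAlgebra.ofCoeff_finsuppSum, map_finsuppSum]
    simp_rw [AddMonoidAlgebra.ofCoeff_single, hsingle]
    rw [AddMonoidAlgebra.coeff_finsuppSum, Finsupp.sum_apply]
    simp only [AddMonoidAlgebra.coeff_single, Finsupp.single_apply]
    rw [Finsupp.sum_ite_eq' f.coeff m (fun n a => a * s ^ n)]
    split_ifs with h
    · rfl
    · rw [Finsupp.notMem_support_iff.mp h, zero_mul]
  -- coefficient of C a * f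
  have hCmul : ∀ (a : ℝ) (f : LaurentPolynomial ℝ) (m : ℤ), (C a * f).coeff m = a * f.coeff m := by
    intro a f m
    rw [C_eq_algebraMap, ← Algebra.smul_def]
    exact Finsupp.smul_apply a f.coeff m
  intro I hI
  by_cases hbot : I = ⊥
  · exact Or.inl hbot
  right
  have hex : ∃ c : ℕ, ∃ f : LaurentPolynomial ℝ,
      f ∈ I ∧ f ≠ 0 ∧ f.coeff.support.card = c := by
    have : ∃ f : LaurentPolynomial ℝ, f ∈ I ∧ f ≠ 0 := by
      by_contra h
      push_neg at h
      exact hbot ((Submodule.eq_bot_iff I).mpr fun x hx => h x hx)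
    obtain ⟨f, hfI, hf0⟩ := this
    exact ⟨_, f, hfI, hf0, rfl⟩
  obtain ⟨f, hfI, hf0, hfcard⟩ := Nat.find_spec hex
  have hmin : ∀ g : LaurentPolynomial ℝ, g ∈ I → g ≠ 0 →
      f.coeff.support.card ≤ g.coeff.support.card := by
    intro g hgI hg0
    rw [hfcard]
    exact Nat.find_le ⟨g, hgI, hg0, rfl⟩
  -- pick an exponent in the support of f
  have hsupp : f.coeff.support.Nonempty := Finsupp.support_nonempty_iff.mpr (AddMonoidAlgebra.coeff_eq_zero.not.mpr hf0)
  obtain ⟨n0, hn0⟩ := hsupp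
  -- subtract to kill coefficient n0
  set g : LaurentPolynomial ℝ := φ f - C (s ^ n0) * f with hgdef
  have hgI : g ∈ I := I.sub_mem (hI f hfI) (I.mul_mem_left _ hfI)
  have hgcoeff : ∀ m : ℤ, g.coeff m = f.coeff m * (s ^ m - s ^ n0) := by
    intro m
    have : g.coeff m = (φ f).coeff m - (C (s ^ n0) * f).coeff m := rfl
    rw [this, hcoeff, hCmul]
    ring
  have hgsupp : g.coeff.support ⊆ f.coeff.support.erase n0 := by
    intro m hm
    rw [Finsupp.mem_support_iff, hgcoeff] at hm
    rcases mul_ne_zero_iff.mp hm with ⟨h1, h2⟩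
    refine Finset.mem_erase.mpr ⟨?_, Finsupp.mem_support_iff.mpr h1⟩
    intro hmn0
    exact h2 (by rw [hmn0, sub_self])
  have hg0 : g = 0 := by
    by_contra hg0
    have := hmin g hgI hg0
    have hlt : g.coeff.support.card < f.coeff.support.card :=
      lt_of_le_of_lt (Finset.card_le_card hgsupp) (Finset.card_erase_lt_of_mem hn0)
    omega
  -- hence f is a monomial
  have hmono : ∀ m : ℤ, m ∈ f.coeff.support → m = n0 := by
    intro m hm
    have hfm : f.coeff m ≠ 0 := Finsupp.mem_support_iff.mp hm
    have : f.coeff m * (s ^ m - s ^ n0) = 0 := by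
      rw [← hgcoeff m, hg0]; rfl
    have h2 : s ^ m = s ^ n0 := by
      rcases mul_eq_zero.mp this with h | h
      · exact absurd h hfm
      · linarith [sub_eq_zero.mp h]
    exact zpow_right_injective₀ hs0 hs1 h2
  have hfsingle : f = AddMonoidAlgebra.single n0 (f.coeff n0) := by
    apply AddMonoidAlgebra.coeff_injective
    ext m
    rw [AddMonoidAlgebra.coeff_single]
    rcases eq_or_ne m n0 with rfl | hmn
    · rw [Finsupp.single_eq_same]
    · rw [Finsupp.single_eq_of_ne hmn]
      by_contra h
      exact hmn (hmono m (Finsupp.mem_support_iff.mpr h))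
  -- f is a unit, so I = ⊤
  have hn0ne : f.coeff n0 ≠ 0 := Finsupp.mem_support_iff.mp hn0
  have hunit : IsUnit f := by
    rw [hfsingle, single_eq_C_mul_T]
    refine IsUnit.mul ?_ (isUnit_T n0)
    refine IsUnit.of_mul_eq_one (C (f.coeff n0)⁻¹) ?_
    rw [← map_mul, mul_inv_cancel₀ hn0ne, map_one]
  exact I.eq_top_of_isUnit_mem hfI hunit
end

section
/- Let e = exp(1) and let φ be the ℝ-algebra automorphism of the Laurent polynomial ring ℝ[T, T⁻¹] determined by φ(T) = e·T. Then (ℝ[T, T⁻¹], φ) is a real Picard–Vessiot extension for the 1×1 system φY = eY over the difference field (ℝ, id): T is an invertible solution of φ(T) = eT, ℝ[T, T⁻¹] is generated over ℝ by T and T⁻¹, (ℝ[T, T⁻¹], φ) is a simple difference ring, and ℝ[T, T⁻¹] is a real ring. -/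
universe u v w x

open scoped TensorProduct

section Aux
open LaurentPolynomial


lemma phiT_int (φ : LaurentPolynomial ℝ ≃+* LaurentPolynomial ℝ)
    (hφT : φ (T 1) = C (Real.exp 1) * T 1) (n : ℤ) :
    φ (T n) = C (Real.exp 1 ^ n) * T n := by
  have he : Real.exp 1 ≠ 0 := (Real.exp_pos 1).ne'
  have hneg : φ (T (-1)) = C ((Real.exp 1)⁻¹) * T (-1) := by
    have h1 : φ (T 1) * φ (T (-1)) = 1 := by
      rw [← map_mul, ← T_add, add_neg_cancel, T_zero, map_one]
    have h2 : φ (T 1) * (C ((Real.exp 1)⁻¹) * T (-1)) = 1 := by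
      rw [hφT, mul_mul_mul_comm, ← map_mul, mul_inv_cancel₀ he, map_one, one_mul,
        ← T_add, add_neg_cancel, T_zero]
    calc φ (T (-1)) = φ (T (-1)) * (φ (T 1) * (C ((Real.exp 1)⁻¹) * T (-1))) := by
          rw [h2, mul_one]
      _ = (φ (T 1) * φ (T (-1))) * (C ((Real.exp 1)⁻¹) * T (-1)) := by ring
      _ = C ((Real.exp 1)⁻¹) * T (-1) := by rw [h1, one_mul]
  induction n using Int.induction_on with
  | zero => simp [T_zero]
  | succ k ih =>
      rw [show ((k : ℤ) + 1) = k + 1 from rfl, T_add, map_mul, ih, hφT,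
        mul_mul_mul_comm, ← map_mul, ← T_add, ← zpow_add_one₀ he]
  | pred k ih =>
      rw [show (-(k : ℤ) - 1) = -k + (-1) from by ring, T_add, map_mul, ih, hneg,
        mul_mul_mul_comm, ← map_mul, ← T_add]
      congr 1
      rw [← zpow_neg_one, ← zpow_add₀ he]

lemma adjoin_lem : Algebra.adjoin ℝ
    ({T 1, T (-1)} : Set (LaurentPolynomial ℝ)) = ⊤ := by
  rw [eq_top_iff]
  intro f hf
  clear hf
  induction f using LaurentPolynomial.induction_on' with
  | add p q hp hq => exact add_mem hp hq
  | C_mul_T n a =>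
      have hT : (T n : LaurentPolynomial ℝ) ∈ Algebra.adjoin ℝ
          ({T 1, T (-1)} : Set (LaurentPolynomial ℝ)) := by
        rcases le_or_gt 0 n with h | h
        · have h2 : (T 1 : LaurentPolynomial ℝ) ^ n.toNat = T n := by
            rw [T_pow]; congr 1; omega
          rw [← h2]
          exact pow_mem (Algebra.subset_adjoin (Set.mem_insert _ _)) _
        · have h2 : (T (-1) : LaurentPolynomial ℝ) ^ (-n).toNat = T n := by
            rw [T_pow]; congr 1; omega
          have hmem : (T (-1) : LaurentPolynomial ℝ) ∈
              ({T 1, T (-1)} : Set (LaurentPolynomial ℝ)) :=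
            Set.mem_insert_of_mem _ (Set.mem_singleton _)
          rw [← h2]
          exact pow_mem (Algebra.subset_adjoin hmem) _
      have hC : (C a : LaurentPolynomial ℝ) ∈ Algebra.adjoin ℝ
          ({T 1, T (-1)} : Set (LaurentPolynomial ℝ)) := by
        rw [C_eq_algebraMap]
        exact Subalgebra.algebraMap_mem _ a
      exact mul_mem hC hT


lemma simple_lem (φ : LaurentPolynomial ℝ ≃+* LaurentPolynomial ℝ)
    (hφC : ∀ r : ℝ, φ (C r) = C r)
    (hφT : φ (T 1) = C (Real.exp 1) * T 1) : IsSimpleDiffRing φ := by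
  intro I hI
  by_cases hbot : I = ⊥
  · exact Or.inl hbot
  right
  obtain ⟨f, hfI, hf0⟩ := Submodule.exists_mem_ne_zero_of_ne_bot hbot
  set e := Real.exp 1 with hedef
  have he0 : (0:ℝ) < e := Real.exp_pos 1
  have he1 : e ≠ 1 := by
    have : (1:ℝ) < e := by nlinarith [Real.add_one_le_exp (1:ℝ)]
    exact this.ne'
  have hzinj : Function.Injective fun n : ℤ => e ^ n := zpow_right_injective₀ he0 he1
  have key : ∀ m : ℕ, ∀ f : LaurentPolynomial ℝ,
      f.coeff.support.card ≤ m → f ∈ I → f ≠ 0 → I = ⊤ := by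
    intro m
    induction m with
    | zero =>
        intro f hcard _ hf0
        exact absurd (AddMonoidAlgebra.coeff_eq_zero.mp <| Finsupp.support_eq_empty.mp (Finset.card_eq_zero.mp
          (Nat.le_zero.mp hcard))) hf0
    | succ m ih =>
        intro f hcard hfI hf0
        obtain ⟨d, hd⟩ := Finsupp.support_nonempty_iff.mpr (mt AddMonoidAlgebra.coeff_eq_zero.mp hf0)
        by_cases hsing : f.coeff.support.erase d = ∅
        · -- support = {d}, f is a unit
          have hsupp : f.coeff.support = {d} := by
            apply Finset.eq_singleton_iff_unique_mem.mpr
            refine ⟨hd, fun x hx => ?_⟩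
            by_contra hxd
            exact (Finset.eq_empty_iff_forall_notMem.mp hsing x)
              (Finset.mem_erase.mpr ⟨hxd, hx⟩)
          obtain ⟨hfd, hfe⟩ := Finsupp.support_eq_singleton.mp hsupp
          have : IsUnit f := by
            have hfe' : f = AddMonoidAlgebra.single d (f.coeff d) :=
              AddMonoidAlgebra.coeff_injective hfe
            rw [hfe', single_eq_C_mul_T]
            exact ((isUnit_iff_ne_zero.mpr hfd).map (C : ℝ →+* LaurentPolynomial ℝ)).mul
              (isUnit_T d)
          exact Ideal.eq_top_of_isUnit_mem I hfI this
        · obtain ⟨n', hn'⟩ := Finset.nonempty_iff_ne_empty.mpr hsing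
          set g : LaurentPolynomial ℝ := φ f - C (e ^ d) * f with hgdef
          have hgI : g ∈ I := I.sub_mem (hI f hfI) (I.mul_mem_left _ hfI)
          -- compute g as a sum of singles over the erased support
          have hfsum : f = ∑ n ∈ f.coeff.support, AddMonoidAlgebra.single n (f.coeff n) := by
            conv_lhs => rw [← AddMonoidAlgebra.sum_coeff_single f]
            rfl
          have hphif : φ f = ∑ n ∈ f.coeff.support, AddMonoidAlgebra.single n (e ^ n * f.coeff n) := by
            conv_lhs => rw [hfsum]
            rw [map_sum]
            refine Finset.sum_congr rfl fun n _ => ?_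
            rw [single_eq_C_mul_T, map_mul, hφC, phiT_int φ hφT, single_eq_C_mul_T,
              ← mul_assoc, ← map_mul, mul_comm (f.coeff n)]
          have hcf : C (e ^ d) * f = ∑ n ∈ f.coeff.support, AddMonoidAlgebra.single n (e ^ d * f.coeff n) := by
            conv_lhs => rw [hfsum]
            rw [Finset.mul_sum]
            refine Finset.sum_congr rfl fun n _ => ?_
            rw [single_eq_C_mul_T, single_eq_C_mul_T, ← mul_assoc, ← map_mul]
          have hg : g = ∑ n ∈ f.coeff.support, AddMonoidAlgebra.single n ((e ^ n - e ^ d) * f.coeff n) := by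
            rw [hgdef, hphif, hcf, ← Finset.sum_sub_distrib]
            refine Finset.sum_congr rfl fun n _ => ?_
            rw [← AddMonoidAlgebra.single_sub, sub_mul]
          have hg' : g = ∑ n ∈ f.coeff.support.erase d, AddMonoidAlgebra.single n ((e ^ n - e ^ d) * f.coeff n) := by
            rw [hg, ← Finset.sum_erase _ (by rw [sub_self, zero_mul, AddMonoidAlgebra.single_zero])]
          have hgapp : ∀ x : ℤ, g.coeff x = if x ∈ f.coeff.support.erase d then (e ^ x - e ^ d) * f.coeff x
              else 0 := by
            intro x
            rw [hg', AddMonoidAlgebra.coeff_sum, Finset.sum_apply']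
            simp only [AddMonoidAlgebra.coeff_single, Finsupp.single_apply]
            rw [Finset.sum_ite_eq' (f.coeff.support.erase d) x]
          have hsub : g.coeff.support ⊆ f.coeff.support.erase d := by
            intro x hx
            rw [Finsupp.mem_support_iff, hgapp x] at hx
            by_contra hxx
            simp [hxx] at hx
          have hg0 : g ≠ 0 := by
            intro h0
            have : g.coeff n' = 0 := by rw [h0]; rfl
            rw [hgapp n', if_pos hn'] at this
            rcases mul_eq_zero.mp this with h | h
            · exact (Finset.mem_erase.mp hn').1 (hzinj (by
                have := sub_eq_zero.mp h
                simpa using this))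
            · exact (Finsupp.mem_support_iff.mp (Finset.mem_erase.mp hn').2) h
          have hcard' : g.coeff.support.card ≤ m := by
            calc g.coeff.support.card ≤ (f.coeff.support.erase d).card := Finset.card_le_card hsub
              _ = f.coeff.support.card - 1 := Finset.card_erase_of_mem hd
              _ ≤ m := by omega
          exact ih g hcard' hgI hg0
  exact key f.coeff.support.card f le_rfl hfI hf0

lemma real_lem : ∀ (m : ℕ) (f : Fin m → LaurentPolynomial ℝ),
    (∀ i, f i ≠ 0) → ∑ i, f i ^ 2 = 0 → m = 0 := by
  intro m f hne hsum
  by_contra hm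
  have hmpos : 0 < m := Nat.pos_of_ne_zero hm
  haveI : Nonempty (Fin m) := ⟨⟨0, hmpos⟩⟩
  -- clear denominators
  choose n p hp using fun i => LaurentPolynomial.exists_T_pow (f i)
  set N : ℕ := Finset.univ.sup n with hN
  set q : Fin m → Polynomial ℝ := fun i => p i * Polynomial.X ^ (N - n i) with hq
  have hq' : ∀ i, Polynomial.toLaurent (q i) = f i * T (N : ℤ) := by
    intro i
    rw [hq]
    simp only [map_mul, Polynomial.toLaurent_X_pow, hp i]
    rw [mul_assoc, ← T_add]
    congr 2
    have : n i ≤ N := Finset.le_sup (Finset.mem_univ i)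
    push_cast [Nat.cast_sub this]
    ring
  have hqne : ∀ i, q i ≠ 0 := by
    intro i h0
    have := hq' i
    rw [h0, map_zero] at this
    exact (mul_ne_zero (hne i) (isUnit_T (N:ℤ)).ne_zero) this.symm
  have hqsum : ∑ i, q i ^ 2 = 0 := by
    apply Polynomial.toLaurent_injective
    rw [map_sum, map_zero]
    calc ∑ i, Polynomial.toLaurent (q i ^ 2)
        = ∑ i, f i ^ 2 * T (N:ℤ) ^ 2 := by
          refine Finset.sum_congr rfl fun i _ => ?_
          rw [map_pow, hq' i, mul_pow]
      _ = (∑ i, f i ^ 2) * T (N:ℤ) ^ 2 := by rw [Finset.sum_mul]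
      _ = 0 := by rw [hsum, zero_mul]
  -- now a polynomial argument
  set D : ℕ := Finset.univ.sup fun i => (q i).natDegree with hD
  obtain ⟨i₀, _, hi₀⟩ := Finset.exists_mem_eq_sup Finset.univ Finset.univ_nonempty
    fun i => (q i).natDegree
  have hcoeff : ∀ i, (q i ^ 2).coeff (2 * D) = ((q i).coeff D) ^ 2 := by
    intro i
    have hle : (q i).natDegree ≤ D := by
      rw [hD]; exact Finset.le_sup (f := fun i => (q i).natDegree) (Finset.mem_univ i)
    rcases eq_or_lt_of_le hle with heq | hlt
    · rw [sq (q i), sq]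
      rw [show 2 * D = (q i).natDegree + (q i).natDegree by omega]
      rw [Polynomial.coeff_mul_degree_add_degree]
      rw [Polynomial.leadingCoeff, heq]
    · rw [Polynomial.coeff_eq_zero_of_natDegree_lt hlt, Polynomial.coeff_eq_zero_of_natDegree_lt,
        zero_pow two_ne_zero]
      calc (q i ^ 2).natDegree ≤ 2 * (q i).natDegree := Polynomial.natDegree_pow_le
        _ < 2 * D := by omega
  have hzero : ∑ i, ((q i).coeff D) ^ 2 = 0 := by
    have := congrArg (fun r => Polynomial.coeff r (2 * D)) hqsum
    simpa only [Polynomial.finset_sum_coeff, Polynomial.coeff_zero, hcoeff] using this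
  have : ((q i₀).coeff D) ^ 2 = 0 := by
    have h := (Finset.sum_eq_zero_iff_of_nonneg (fun i _ => sq_nonneg _)).mp hzero
    exact h i₀ (Finset.mem_univ i₀)
  have : (q i₀).coeff D = 0 := by
    exact pow_eq_zero_iff two_ne_zero |>.mp this
  rw [hD, hi₀] at this
  exact (Polynomial.leadingCoeff_ne_zero.mpr (hqne i₀)) this

end Aux

/-- `(ℝ[T, T⁻¹], φ)` with `φ(T) = e·T`, `e = exp 1`, is a real Picard–Vessiot extension
for the `1×1` system `φY = eY` over `(ℝ, id)`: `T` is an invertible solution,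
`ℝ[T, T⁻¹]` is generated over `ℝ` by `T` and `T⁻¹`, `(ℝ[T, T⁻¹], φ)` is a simple
difference ring, and `ℝ[T, T⁻¹]` is a real ring. -/
theorem statement15
    (φ : LaurentPolynomial ℝ ≃+* LaurentPolynomial ℝ)
    (hφC : ∀ r : ℝ, φ (LaurentPolynomial.C r) = LaurentPolynomial.C r)
    (hφT : φ (LaurentPolynomial.T 1) =
      LaurentPolynomial.C (Real.exp 1) * LaurentPolynomial.T 1) :
    IsUnit (LaurentPolynomial.T 1 : LaurentPolynomial ℝ) ∧
    φ (LaurentPolynomial.T 1) = LaurentPolynomial.C (Real.exp 1) * LaurentPolynomial.T 1 ∧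
    Algebra.adjoin ℝ
      ({LaurentPolynomial.T 1, LaurentPolynomial.T (-1)} : Set (LaurentPolynomial ℝ)) = ⊤ ∧
    IsSimpleDiffRing φ ∧
    IsRealRing (LaurentPolynomial ℝ) := by
  exact ⟨LaurentPolynomial.isUnit_T 1, hφT, adjoin_lem, simple_lem φ hφC hφT, real_lem⟩
end
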